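/- arXiv:2212.11689 — 16 statements merged into one kernel-verified Lean document; each statement's English description precedes it below -/
import Mathlib

section
/- The floor quotient relation ≼₁ defines a partial order on the positive integers: it is reflexive, antisymmetric, and transitive. Moreover it is an approximate divisor order: for all positive integers d and n, if d divides n then d ≼₁ n, and if d ≼₁ n then d ≤ n. -/
/-- `d` is a floor quotient of `n`: `d = ⌊n/k⌋` for some positive integer `k`. -/
def FloorQuotient (d n : ℕ) : Prop := ∃ k : ℕ, 0 < k ∧ d = n / k

theorem floor_quotient_partial_order_and_approx_divisor :
    (∀ n : ℕ, 0 < n → FloorQuotient n n) ∧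
    (∀ d n : ℕ, 0 < d → 0 < n → FloorQuotient d n → FloorQuotient n d → d = n) ∧
    (∀ d m n : ℕ, 0 < d → 0 < m → 0 < n →
      FloorQuotient d m → FloorQuotient m n → FloorQuotient d n) ∧
    (∀ d n : ℕ, 0 < d → 0 < n → d ∣ n → FloorQuotient d n) ∧
    (∀ d n : ℕ, 0 < d → 0 < n → FloorQuotient d n → d ≤ n) := by
  have hle : ∀ d n : ℕ, 0 < d → 0 < n → FloorQuotient d n → d ≤ n := by
    rintro d n _ _ ⟨k, hk, rfl⟩
    exact Nat.div_le_self n k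
  refine ⟨fun n hn => ⟨1, one_pos, (Nat.div_one n).symm⟩, ?_, ?_, ?_, hle⟩
  · intro d n hd hn h1 h2
    exact le_antisymm (hle d n hd hn h1) (hle n d hn hd h2)
  · rintro d m n _ _ _ ⟨k, hk, rfl⟩ ⟨j, hj, rfl⟩
    exact ⟨j * k, Nat.mul_pos hj hk, Nat.div_div_eq_div_mul n j k⟩
  · rintro d n hd hn ⟨c, rfl⟩
    have hc : 0 < c := Nat.pos_of_ne_zero fun h => by simp [h] at hn
    exact ⟨c, hc, (Nat.mul_div_cancel d hc).symm⟩
end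

section
/- For positive integers d and n, the following are equivalent: (1) d = ⌊n/k⌋ for some positive integer k; (2) there exists a positive integer k with k·d ≤ n and n + 1 ≤ k·(d+1) (i.e. the interval k[d,d+1) covers [n,n+1)); (3) there exists a positive integer k such that n = d·k + r for some integer r with 0 ≤ r < min(d,k); (4) ⌊n/d⌋ > ⌊n/(d+1)⌋; (5) d = ⌊n/⌊n/d⌋⌋. -/
theorem floor_quotient_characterizations (d n : ℕ) (hd : 0 < d) (hn : 0 < n) :
    [ FloorQuotient d n,
      ∃ k : ℕ, 0 < k ∧ k * d ≤ n ∧ n + 1 ≤ k * (d + 1),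
      ∃ k r : ℕ, 0 < k ∧ n = d * k + r ∧ r < min d k,
      n / (d + 1) < n / d,
      d = n / (n / d) ].TFAE := by
  tfae_have 1 → 2 := by
    rintro ⟨k, hk, rfl⟩
    refine ⟨k, hk, ?_, ?_⟩
    · rw [mul_comm]; exact Nat.div_mul_le_self n k
    · have h : n < k * (n / k + 1) := by
        rw [mul_comm]; exact (Nat.div_lt_iff_lt_mul hk).mp (Nat.lt_succ_self _)
      omega
  tfae_have 2 → 4 := by
    rintro ⟨k, hk, h1, h2⟩
    have hle : k ≤ n / d := (Nat.le_div_iff_mul_le hd).mpr h1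
    have hlt : n / (d + 1) < k := (Nat.div_lt_iff_lt_mul (by omega)).mpr (by omega)
    omega
  tfae_have 4 → 5 := by
    intro h4
    have hq : 0 < n / d := lt_of_le_of_lt (Nat.zero_le _) h4
    have h1 : d ≤ n / (n / d) := by
      refine (Nat.le_div_iff_mul_le hq).mpr ?_
      rw [mul_comm]; exact Nat.div_mul_le_self n d
    have h2 : n / (n / d) < d + 1 := by
      refine (Nat.div_lt_iff_lt_mul hq).mpr ?_
      by_contra h
      push_neg at h
      have : n / d ≤ n / (d + 1) :=
        (Nat.le_div_iff_mul_le (by omega)).mpr (by rw [mul_comm]; exact h)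
      omega
    omega
  tfae_have 5 → 3 := by
    intro h5
    have hq : 0 < n / d := by
      rcases Nat.eq_zero_or_pos (n / d) with h | h
      · rw [h] at h5; simp at h5; omega
      · exact h
    refine ⟨n / d, n % d, hq, ?_, ?_⟩
    · have := Nat.div_add_mod n d; omega
    · have hr1 : n % d < d := Nat.mod_lt n hd
      have hr2 : n % d < n / d := by
        have h2 : n / (n / d) < d + 1 := by omega
        have h3 : n < (d + 1) * (n / d) := (Nat.div_lt_iff_lt_mul hq).mp h2
        have h4 : (d + 1) * (n / d) = d * (n / d) + n / d := by ring
        have := Nat.div_add_mod n d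
        omega
      omega
  tfae_have 3 → 2 := by
    rintro ⟨k, r, hk, hnn, hr⟩
    refine ⟨k, hk, ?_, ?_⟩
    · rw [mul_comm]; omega
    · have : k * (d + 1) = d * k + k := by ring
      omega
  tfae_have 5 → 1 := by
    intro h5
    have hq : 0 < n / d := by
      rcases Nat.eq_zero_or_pos (n / d) with h | h
      · rw [h] at h5; simp at h5; omega
      · exact h
    exact ⟨n / d, hq, h5⟩
  tfae_finish
end

section
/- Suppose d and n are positive integers with d ≼₁ n. Then the cutting length set K(d,n) = {k ∈ ℕ⁺ : d = ⌊n/k⌋} contains exactly one element that is itself a floor quotient of n, namely k* = ⌊n/d⌋, and k* is the largest element of K(d,n). -/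
/-- The cutting length set `K(d,n) = {k ∈ ℕ⁺ : d = ⌊n/k⌋}`. -/
def cutSet (d n : ℕ) : Set ℕ := {k : ℕ | 0 < k ∧ d = n / k}

lemma div_div_of_floor_quotient (n d k : ℕ) (hd : 0 < d) (hk : 0 < k)
    (hdk : d = n / k) : n / (n / d) = d := by
  have hkq : k ≤ n / d := Nat.le_div_iff_mul_le hd |>.mpr (by
    rw [hdk, mul_comm]; exact Nat.div_mul_le_self n k)
  have hq : 0 < n / d := lt_of_lt_of_le hk hkq
  have h1 : d ≤ n / (n / d) :=
    Nat.le_div_iff_mul_le hq |>.mpr (Nat.mul_comm d (n/d) ▸ Nat.div_mul_le_self n d)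
  have h2 : n / (n / d) < d + 1 := by
    rw [Nat.div_lt_iff_lt_mul hq]
    calc n < (n / k + 1) * k := by
          have h3 := Nat.div_add_mod n k
          have h4 := Nat.mod_lt n hk
          nlinarith
    _ = (d + 1) * k := by rw [hdk]
    _ ≤ (d + 1) * (n / d) := Nat.mul_le_mul_left _ hkq
  omega

theorem cutting_length_set_unique_floor_quotient (d n : ℕ) (hd : 0 < d) (hn : 0 < n)
    (h : FloorQuotient d n) :
    (n / d ∈ cutSet d n ∧ FloorQuotient (n / d) n) ∧
    (∀ k ∈ cutSet d n, FloorQuotient k n → k = n / d) ∧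
    (∀ k ∈ cutSet d n, k ≤ n / d) := by
  obtain ⟨k, hk, hdk⟩ := h
  have hkq : k ≤ n / d := Nat.le_div_iff_mul_le hd |>.mpr (by
    rw [hdk, mul_comm]; exact Nat.div_mul_le_self n k)
  have hq : 0 < n / d := lt_of_lt_of_le hk hkq
  have key := div_div_of_floor_quotient n d k hd hk hdk
  refine ⟨⟨⟨hq, key.symm⟩, ⟨d, hd, rfl⟩⟩, ?_, ?_⟩
  · rintro m ⟨hm, hdm⟩ ⟨j, hj, hmj⟩
    have := div_div_of_floor_quotient n m j hm hj hmj
    rw [← hdm] at this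
    omega
  · rintro m ⟨hm, hdm⟩
    exact Nat.le_div_iff_mul_le hd |>.mpr (by
      rw [hdm, mul_comm]; exact Nat.div_mul_le_self n m)
end

section
/- For a positive integer d, the set M(d) = {n ∈ ℕ⁺ : d ≼₁ n} of floor multiples of d is closed under addition, contains every integer n ≥ d², and for d ≥ 2 the integer d² − 1 does not belong to M(d); hence for d ≥ 2, the largest positive integer not in M(d) is d² − 1. -/
/-- The set of floor multiples of `d`. -/
def floorMultiples (d : ℕ) : Set ℕ := {n : ℕ | 0 < n ∧ FloorQuotient d n}

lemma fq_iff (d n : ℕ) : FloorQuotient d n ↔ ∃ k : ℕ, 0 < k ∧ d * k ≤ n ∧ n < d * k + k := by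
  constructor
  · rintro ⟨k, hk, hd⟩
    subst hd
    have h1 := Nat.div_add_mod n k
    have h2 := Nat.mod_lt n hk
    exact ⟨k, hk, by rw [Nat.mul_comm]; omega, by rw [Nat.mul_comm]; omega⟩
  · rintro ⟨k, hk, h1, h2⟩
    exact ⟨k, hk, (Nat.div_eq_of_lt_le h1 (by nlinarith)).symm⟩

theorem floor_multiples_semigroup_and_frobenius (d : ℕ) (hd : 0 < d) :
    (∀ m n : ℕ, m ∈ floorMultiples d → n ∈ floorMultiples d → m + n ∈ floorMultiples d) ∧
    (∀ n : ℕ, d ^ 2 ≤ n → n ∈ floorMultiples d) ∧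
    (2 ≤ d →
      (d ^ 2 - 1 ∉ floorMultiples d) ∧
      (∀ n : ℕ, 0 < n → n ∉ floorMultiples d → n ≤ d ^ 2 - 1)) := by
  have hmem : ∀ n : ℕ, n ∈ floorMultiples d ↔
      0 < n ∧ ∃ k : ℕ, 0 < k ∧ d * k ≤ n ∧ n < d * k + k := by
    intro n
    simp only [floorMultiples, Set.mem_setOf_eq, fq_iff]
  have hpart2 : ∀ n : ℕ, d ^ 2 ≤ n → n ∈ floorMultiples d := by
    intro n hn
    rw [hmem]
    have hn0 : 0 < n := by nlinarith
    have hdk : d ≤ n / d := Nat.le_div_iff_mul_le hd |>.mpr (by nlinarith)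
    have h1 := Nat.div_add_mod n d
    have h2 := Nat.mod_lt n hd
    refine ⟨hn0, n / d, by omega, by rw [Nat.mul_comm]; exact Nat.div_mul_le_self n d, ?_⟩
    have h3 : d * (n / d) + d ≤ d * (n / d) + n / d := by omega
    linarith
  refine ⟨?_, hpart2, ?_⟩
  · intro m n hm hn
    rw [hmem] at hm hn ⊢
    obtain ⟨hm0, k, hk0, hk1, hk2⟩ := hm
    obtain ⟨hn0, l, hl0, hl1, hl2⟩ := hn
    exact ⟨by omega, k + l, by omega, by nlinarith, by nlinarith⟩
  · intro hd2
    constructor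
    · rw [hmem]
      rintro ⟨-, k, hk0, hk1, hk2⟩
      have h1 : (1:ℕ) ≤ d ^ 2 := Nat.one_le_pow _ _ hd
      zify [h1] at hk1 hk2
      have hd' : (2:ℤ) ≤ d := by exact_mod_cast hd2
      have hk0' : (1:ℤ) ≤ k := by exact_mod_cast hk0
      have hkd : (k:ℤ) ≤ d - 1 := by nlinarith
      nlinarith
    · intro n hn0 hn
      by_contra h
      exact hn (hpart2 n (by omega))
end

section
/- For a positive integer d, the number of positive integers not belonging to the set M(d) = {n ∈ ℕ⁺ : d ≼₁ n} of floor multiples of d is exactly (d−1)(d+2)/2. -/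
lemma floorQuotient_iff (d n : ℕ) (hd : 0 < d) :
    FloorQuotient d n ↔ d * (n / (d+1) + 1) ≤ n := by
  constructor
  · rintro ⟨k, hk, rfl⟩
    have h1 : (n / k) * k ≤ n := Nat.div_mul_le_self n k
    have h2 := Nat.div_add_mod n k
    have h3 : n % k < k := Nat.mod_lt _ hk
    have h4 : n < k * (n / k + 1) := by
      have : k * (n / k + 1) = k * (n / k) + k := by ring
      omega
    have h5 : n / (n / k + 1) < k :=
      (Nat.div_lt_iff_lt_mul (Nat.succ_pos _)).mpr h4
    have h6 : n / (n / k + 1) + 1 ≤ k := h5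
    calc (n / k) * (n / (n / k + 1) + 1) ≤ (n / k) * k :=
          Nat.mul_le_mul_left _ h6
      _ ≤ n := h1
  · intro h
    refine ⟨n / (d+1) + 1, Nat.succ_pos _, ?_⟩
    have hq := Nat.div_add_mod n (d+1)
    have hr : n % (d+1) < d+1 := Nat.mod_lt _ (by omega)
    have hi : n < (d+1) * (n/(d+1) + 1) := by
      have : (d+1) * (n/(d+1) + 1) = (d+1) * (n/(d+1)) + (d+1) := by ring
      omega
    have hlo : d * (n/(d+1) + 1) ≤ n := h
    symm
    exact Nat.div_eq_of_lt_le hlo hi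

lemma div_eq_of_block (d q n : ℕ) (h1 : (d+1)*q ≤ n) (h2 : n < d*q+d) :
    n / (d+1) = q := by
  apply Nat.div_eq_of_lt_le
  · calc q * (d+1) = (d+1)*q := by ring
      _ ≤ n := h1
  · have e : (q+1)*(d+1) = d*q + q + d + 1 := by ring
    omega

theorem card_non_floor_multiples (d : ℕ) (hd : 0 < d) :
    {n : ℕ | 0 < n ∧ ¬ FloorQuotient d n}.ncard = (d - 1) * (d + 2) / 2 := by
  set B : Finset ℕ := (Finset.range d).biUnion fun q => Finset.Ico ((d+1)*q) (d*q+d)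
    with hB
  have hmemB : ∀ n, n ∈ B ↔ ∃ q, q < d ∧ (d+1)*q ≤ n ∧ n < d*q+d := by
    intro n
    constructor
    · intro h
      rw [hB, Finset.mem_biUnion] at h
      obtain ⟨q, hq, hn⟩ := h
      rw [Finset.mem_Ico] at hn
      exact ⟨q, Finset.mem_range.mp hq, hn.1, hn.2⟩
    · rintro ⟨q, hq, h1, h2⟩
      rw [hB, Finset.mem_biUnion]
      exact ⟨q, Finset.mem_range.mpr hq, Finset.mem_Ico.mpr ⟨h1, h2⟩⟩
  have hset : {n : ℕ | 0 < n ∧ ¬ FloorQuotient d n} = ↑(B \ {0}) := by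
    ext n
    simp only [Set.mem_setOf_eq, Finset.coe_sdiff, Finset.coe_singleton, Set.mem_diff,
      Set.mem_singleton_iff, Finset.mem_coe, hmemB, floorQuotient_iff d n hd, not_le]
    constructor
    · rintro ⟨hn, h⟩
      refine ⟨⟨n/(d+1), ?_, ?_, h⟩, by omega⟩
      · have h1 : (d+1)*(n/(d+1)) ≤ n := Nat.mul_div_le n (d+1)
        have e1 : (d+1)*(n/(d+1)) = d*(n/(d+1)) + n/(d+1) := by ring
        have e2 : d*(n/(d+1)+1) = d*(n/(d+1)) + d := by ring
        omega
      · exact Nat.mul_div_le n (d+1)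
    · rintro ⟨⟨q, hq, h1, h2⟩, hn⟩
      have hdiv : n / (d+1) = q := div_eq_of_block d q n h1 h2
      rw [hdiv]
      have e2 : d*(q+1) = d*q + d := by ring
      omega
  rw [hset, Set.ncard_coe_finset]
  have h0 : 0 ∈ B := by
    rw [hmemB]
    exact ⟨0, hd, by simp, by simpa using hd⟩
  rw [Finset.card_sdiff_of_subset (by simpa using h0), Finset.card_singleton]
  have hcard : B.card = ∑ q ∈ Finset.range d, (d - q) := by
    rw [hB, Finset.card_biUnion]
    · apply Finset.sum_congr rfl
      intro q hq
      rw [Nat.card_Ico]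
      have e1 : (d+1)*q = d*q + q := by ring
      simp only [Finset.mem_range] at hq
      omega
    · intro q hq q' hq' hne
      rw [Function.onFun, Finset.disjoint_left]
      intro n hn hn'
      simp only [Finset.mem_Ico] at hn hn'
      exact hne (by rw [← div_eq_of_block d q n hn.1 hn.2,
        div_eq_of_block d q' n hn'.1 hn'.2])
  have hrefl : ∑ q ∈ Finset.range d, (d - q) = ∑ q ∈ Finset.range d, (q + 1) := by
    rw [← Finset.sum_range_reflect (fun q => q + 1) d]
    apply Finset.sum_congr rfl
    intro q hq
    simp only [Finset.mem_range] at hq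
    omega
  have hgauss : (∑ i ∈ Finset.range d, i) * 2 = d * (d - 1) := Finset.sum_range_id_mul_two d
  have hsum1 : ∑ q ∈ Finset.range d, (q + 1) = (∑ i ∈ Finset.range d, i) + d := by
    rw [Finset.sum_add_distrib, Finset.sum_const, Finset.card_range, smul_eq_mul, mul_one]
  obtain ⟨m, rfl⟩ : ∃ m, d = m + 1 := ⟨d - 1, by omega⟩
  have e1 : (m+1-1) * (m+1+2) = m*m + 3*m := by simp; ring
  have e2 : (m+1) * (m+1-1) = m*m + m := by simp; ring
  omega
end

section
/- For a positive integer d, let γᵢ = i(d+1) − 1 for 1 ≤ i ≤ d. Then the set M(d) = {n ∈ ℕ⁺ : d ≼₁ n} of floor multiples of d equals the set of all nonzero nonnegative-integer combinations of γ₁, γ₂, …, γ_d, and this generating set is minimal: for each i, γᵢ is not a nonnegative-integer combination of the remaining generators {γⱼ : j ≠ i}. -/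
/-- Key identity: sum of c j * γⱼ plus sum of c equals weighted sum times (d+1). -/
lemma fq_key (d : ℕ) (c : ℕ → ℕ) :
    (∑ j ∈ Finset.Icc 1 d, c j * (j * (d + 1) - 1)) + (∑ j ∈ Finset.Icc 1 d, c j)
      = (∑ j ∈ Finset.Icc 1 d, c j * j) * (d + 1) := by
  rw [Finset.sum_mul, ← Finset.sum_add_distrib]
  refine Finset.sum_congr rfl ?_
  intro j hj
  simp only [Finset.mem_Icc] at hj
  have h1 : 0 < j * (d + 1) := Nat.mul_pos (by omega) (by omega)
  have h2 : j * (d + 1) - 1 + 1 = j * (d + 1) := by omega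
  calc c j * (j * (d + 1) - 1) + c j = c j * ((j * (d + 1) - 1) + 1) := by ring
    _ = c j * (j * (d + 1)) := by rw [h2]
    _ = c j * j * (d + 1) := by ring

lemma fq_s_le_m (d : ℕ) (c : ℕ → ℕ) :
    (∑ j ∈ Finset.Icc 1 d, c j) ≤ ∑ j ∈ Finset.Icc 1 d, c j * j := by
  refine Finset.sum_le_sum ?_
  intro j hj
  simp only [Finset.mem_Icc] at hj
  exact Nat.le_mul_of_pos_right _ hj.1

lemma fq_m_le_sd (d : ℕ) (c : ℕ → ℕ) :
    (∑ j ∈ Finset.Icc 1 d, c j * j) ≤ (∑ j ∈ Finset.Icc 1 d, c j) * d := by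
  rw [Finset.sum_mul]
  refine Finset.sum_le_sum ?_
  intro j hj
  simp only [Finset.mem_Icc] at hj
  exact Nat.mul_le_mul_left _ hj.2

/-- Construction: any (s, m) with 1 ≤ s ≤ m ≤ s*d is realized by some coefficients. -/
lemma fq_exists_c (d s m : ℕ) (hs : 1 ≤ s) (hsm : s ≤ m) (hmd : m ≤ s * d) :
    ∃ c : ℕ → ℕ, (∑ j ∈ Finset.Icc 1 d, c j) = s ∧ (∑ j ∈ Finset.Icc 1 d, c j * j) = m := by
  set q := m / s with hq
  set r := m % s with hr
  have hmod : s * q + r = m := Nat.div_add_mod m s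
  have hrs : r < s := Nat.mod_lt _ hs
  have hq1 : 1 ≤ q := by
    rcases Nat.eq_zero_or_pos q with h | h
    · rw [h, Nat.mul_zero] at hmod; omega
    · exact h
  have hqd : q ≤ d := by
    by_contra h
    push_neg at h
    have h1 : s * (d + 1) ≤ s * q := Nat.mul_le_mul_left s h
    have h2 : s * (d + 1) = s * d + s := by ring
    omega
  rcases Nat.eq_zero_or_pos r with hr0 | hr0
  · refine ⟨fun j => if j = q then s else 0, ?_, ?_⟩
    · rw [Finset.sum_ite_eq' (Finset.Icc 1 d) q (fun _ => s)]
      simp [Finset.mem_Icc, hq1, hqd]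
    · have hcong : ∀ j ∈ Finset.Icc 1 d, (if j = q then s else 0) * j
          = if j = q then s * q else 0 := by
        intro j _
        by_cases h : j = q
        · subst h; simp
        · simp [h]
      rw [Finset.sum_congr rfl hcong,
        Finset.sum_ite_eq' (Finset.Icc 1 d) q (fun _ => s * q)]
      simp only [Finset.mem_Icc]
      rw [if_pos ⟨hq1, hqd⟩]
      omega
  · have hqd' : q < d := by
      by_contra h
      push_neg at h
      have : q = d := le_antisymm hqd h
      rw [this] at hmod
      omega
    refine ⟨fun j => (if j = q then s - r else 0) + (if j = q + 1 then r else 0), ?_, ?_⟩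
    · rw [Finset.sum_add_distrib,
        Finset.sum_ite_eq' (Finset.Icc 1 d) q (fun _ => s - r),
        Finset.sum_ite_eq' (Finset.Icc 1 d) (q + 1) (fun _ => r)]
      simp only [Finset.mem_Icc]
      rw [if_pos ⟨hq1, hqd⟩, if_pos ⟨by omega, by omega⟩]
      omega
    · have hcong : ∀ j ∈ Finset.Icc 1 d,
          ((if j = q then s - r else 0) + (if j = q + 1 then r else 0)) * j
          = (if j = q then (s - r) * q else 0) + (if j = q + 1 then r * (q + 1) else 0) := by
        intro j _
        by_cases h1 : j = q
        · subst h1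
          rw [if_pos rfl, if_pos rfl, if_neg (by omega), if_neg (by omega)]
          ring
        · by_cases h2 : j = q + 1
          · subst h2
            rw [if_neg h1, if_neg h1, if_pos rfl, if_pos rfl]
            ring
          · rw [if_neg h1, if_neg h1, if_neg h2, if_neg h2]
            ring
      rw [Finset.sum_congr rfl hcong, Finset.sum_add_distrib,
        Finset.sum_ite_eq' (Finset.Icc 1 d) q (fun _ => (s - r) * q),
        Finset.sum_ite_eq' (Finset.Icc 1 d) (q + 1) (fun _ => r * (q + 1))]
      simp only [Finset.mem_Icc]
      rw [if_pos ⟨hq1, hqd⟩, if_pos ⟨by omega, by omega⟩]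
      have e1 : (s - r) * q + r * (q + 1) = s * q + r := by
        have hsr : s - r + r = s := by omega
        calc (s - r) * q + r * (q + 1) = (s - r + r) * q + r := by ring
          _ = s * q + r := by rw [hsr]
      omega

theorem floor_multiples_minimal_generators (d : ℕ) (hd : 0 < d) :
    (∀ n : ℕ, 0 < n →
      (FloorQuotient d n ↔
        ∃ c : ℕ → ℕ, n = ∑ i ∈ Finset.Icc 1 d, c i * (i * (d + 1) - 1))) ∧
    (∀ i ∈ Finset.Icc 1 d,
      ¬ ∃ c : ℕ → ℕ,
        i * (d + 1) - 1 = ∑ j ∈ (Finset.Icc 1 d).erase i, c j * (j * (d + 1) - 1)) := by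
  constructor
  · intro n hn
    constructor
    · rintro ⟨k, hk, hdk⟩
      have hkd : d * k ≤ n := by
        have h := Nat.div_mul_le_self n k
        rw [← hdk] at h
        linarith [mul_comm d k]
      have hnlt : n < (d + 1) * k := by
        have h1 : n / k < d + 1 := by omega
        have h2 := (Nat.div_lt_iff_lt_mul hk).mp h1
        linarith [mul_comm (d + 1) k]
      set K := n / d with hK
      set r := n % d with hr
      have hA : d * K + r = n := Nat.div_add_mod n d
      have hrd : r < d := Nat.mod_lt _ hd
      have hkK : k ≤ K := by
        rw [hK]
        exact (Nat.le_div_iff_mul_le hd).mpr (by linarith [mul_comm k d])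
      have hdkK : d * k ≤ d * K := Nat.mul_le_mul_left d hkK
      have hrk : r < k := by
        have e : (d + 1) * k = d * k + k := by ring
        linarith
      have hrK : r < K := lt_of_lt_of_le hrk hkK
      set t := K - r with ht
      have htK : K = t + r := by omega
      have ht1 : 1 ≤ t := by omega
      have hmd : K ≤ t * d := by
        obtain ⟨a, ha⟩ : ∃ a, t = a + 1 := ⟨t - 1, by omega⟩
        obtain ⟨b, hb⟩ : ∃ b, d = b + 1 := ⟨d - 1, by omega⟩
        have hrb : r ≤ b := by omega
        rw [htK, ha, hb]
        nlinarith
      obtain ⟨c, hc1, hc2⟩ := fq_exists_c d t K ht1 (by omega) hmd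
      refine ⟨c, ?_⟩
      have hkey := fq_key d c
      rw [hc1, hc2] at hkey
      have e : K * (d + 1) = d * K + K := by ring
      linarith
    · rintro ⟨c, hc⟩
      have hkey := fq_key d c
      set s := ∑ j ∈ Finset.Icc 1 d, c j with hs
      set m := ∑ j ∈ Finset.Icc 1 d, c j * j with hm
      have hsm : s ≤ m := fq_s_le_m d c
      have hmd : m ≤ s * d := fq_m_le_sd d c
      rw [← hc] at hkey
      have hs1 : 1 ≤ s := by
        by_contra h
        push_neg at h
        have hs0 : s = 0 := by omega
        rw [hs0, Nat.zero_mul] at hmd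
        have hm0 : m = 0 := by omega
        rw [hs0, hm0, Nat.zero_mul] at hkey
        omega
      have hm1 : 0 < m := by omega
      refine ⟨m, hm1, ?_⟩
      have e : m * (d + 1) = m * d + m := by ring
      have hlo : d * m ≤ n := by linarith [mul_comm d m]
      have hhi : n < (d + 1) * m := by linarith [mul_comm (d + 1) m]
      exact (Nat.div_eq_of_lt_le hlo hhi).symm
  · rintro i hi ⟨c, hc⟩
    simp only [Finset.mem_Icc] at hi
    classical
    set c' := Function.update c i 0 with hc'
    have hci : c' i = 0 := Function.update_self i 0 c
    have hsum : (∑ j ∈ Finset.Icc 1 d, c' j * (j * (d + 1) - 1))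
        = ∑ j ∈ (Finset.Icc 1 d).erase i, c j * (j * (d + 1) - 1) := by
      rw [← Finset.add_sum_erase _ _ (Finset.mem_Icc.mpr hi), hci]
      simp only [zero_mul, zero_add]
      refine Finset.sum_congr rfl ?_
      intro j hj
      have hji : j ≠ i := Finset.ne_of_mem_erase hj
      rw [hc', Function.update_of_ne hji]
    have hkey := fq_key d c'
    rw [hsum, ← hc] at hkey
    set s := ∑ j ∈ Finset.Icc 1 d, c' j with hs
    set m := ∑ j ∈ Finset.Icc 1 d, c' j * j with hm
    have hsm : s ≤ m := fq_s_le_m d c'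
    have hgi : 0 < i * (d + 1) := Nat.mul_pos (by omega) (by omega)
    have hkey' : i * (d + 1) + s = m * (d + 1) + 1 := by omega
    rcases lt_trichotomy m i with h | h | h
    · have e5 : (m + 1) * (d + 1) = m * (d + 1) + (d + 1) := by ring
      have h6 : (m + 1) * (d + 1) ≤ i * (d + 1) :=
        Nat.mul_le_mul_right _ (by omega : m + 1 ≤ i)
      omega
    · -- m = i, so s = 1
      have hs1 : s = 1 := by rw [h] at hkey'; omega
      have hex : ∃ j0 ∈ Finset.Icc 1 d, c' j0 ≠ 0 := by
        by_contra hno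
        push_neg at hno
        have : s = 0 := Finset.sum_eq_zero (fun j hj => hno j hj)
        omega
      obtain ⟨j0, hj0, hj0ne⟩ := hex
      have hle : c' j0 ≤ s := Finset.single_le_sum (fun _ _ => Nat.zero_le _) hj0
      have hcj0 : c' j0 = 1 := by omega
      have hrest : ∑ j ∈ (Finset.Icc 1 d).erase j0, c' j = 0 := by
        have := Finset.add_sum_erase (Finset.Icc 1 d) c' hj0
        omega
      have hzero : ∀ j ∈ (Finset.Icc 1 d).erase j0, c' j = 0 :=
        Finset.sum_eq_zero_iff.mp hrest
      have hmj0 : m = j0 := by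
        rw [hm, ← Finset.add_sum_erase _ _ hj0, hcj0,
          Finset.sum_eq_zero (fun j hj => by rw [hzero j hj, zero_mul])]
        omega
      have hji : c' j0 = 0 := by
        rw [show j0 = i by omega]
        exact hci
      omega
    · set t := m - i with htdef
      have hmt : m = i + t := by omega
      have ht1 : 1 ≤ t := by omega
      have e3 : (i + t) * (d + 1) = i * (d + 1) + t * (d + 1) := by ring
      have e4 : t * (d + 1) = t * d + t := by ring
      rw [hmt] at hkey'
      have htd : d ≤ t * d := Nat.le_mul_of_pos_left d ht1
      omega
end

section
/- Fix a positive integer n and define J_n(k) = ⌊n/k⌋ for 1 ≤ k ≤ n. Then for every integer k with 1 ≤ k ≤ n, one has J_n(J_n(k)) = k if and only if k is a floor quotient of n. In particular, J_n restricted to the set {d : d ≼₁ n} is an involution, and this set is the largest subset of {1, …, n} on which J_n acts as an involution. -/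
lemma floorquot_inv (n d : ℕ) (h : FloorQuotient d n) : n / (n / d) = d := by
  obtain ⟨k, hk, hd⟩ := h
  rcases Nat.eq_zero_or_pos d with h0 | hdpos
  · subst h0; simp
  have hdn : d ≤ n := hd ▸ Nat.div_le_self n k
  have hq : 0 < n / d := Nat.div_pos hdn hdpos
  apply le_antisymm
  · have hkq : k ≤ n / d := by
      apply Nat.le_div_iff_mul_le hdpos |>.mpr
      rw [hd, Nat.mul_comm]
      exact Nat.div_mul_le_self n k
    calc n / (n / d) ≤ n / k := Nat.div_le_div_left hkq hk
    _ = d := hd.symm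
  · exact (Nat.le_div_iff_mul_le hq).mpr (by rw [Nat.mul_comm]; exact Nat.div_mul_le_self n d)

theorem floor_reciprocal_involution_iff (n : ℕ) (hn : 0 < n) :
    (∀ k : ℕ, 1 ≤ k → k ≤ n → (n / (n / k) = k ↔ FloorQuotient k n)) ∧
    (∀ d : ℕ, FloorQuotient d n → n / (n / d) = d) ∧
    (∀ S : Set ℕ, S ⊆ Set.Icc 1 n → (∀ k ∈ S, n / (n / k) = k) →
      S ⊆ {d : ℕ | FloorQuotient d n}) := by
  refine ⟨fun k hk1 hkn => ⟨fun h => ⟨n / k, Nat.div_pos hkn hk1, h.symm⟩,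
    fun h => floorquot_inv n k h⟩, fun d h => floorquot_inv n d h, ?_⟩
  intro S hS hinv k hk
  obtain ⟨hk1, hkn⟩ := hS hk
  exact ⟨n / k, Nat.div_pos hkn hk1, (hinv k hk).symm⟩
end

section
/- Let n be a positive integer and set s = ⌊√n⌋. Let Q⁻(n) = {d : d ≼₁ n, d ≤ √n} and Q⁺(n) = {d : d ≼₁ n, ⌊n/d⌋ ≤ √n}. Then: (a) {d : d ≼₁ n} = Q⁻(n) ∪ Q⁺(n), and the map d ↦ ⌊n/d⌋ restricts to a bijection from Q⁺(n) onto Q⁻(n) and to a bijection from Q⁻(n) onto Q⁺(n); (b) Q⁻(n) = {1, 2, …, s} and Q⁺(n) = {⌊n/k⌋ : 1 ≤ k ≤ s}; and the intersection Q⁻(n) ∩ Q⁺(n) equals {s} if s² ≤ n < s(s+1), and is empty if s(s+1) ≤ n < (s+1)². -/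
private lemma le_div_div (n k : ℕ) (h : 0 < n / k) : k ≤ n / (n / k) := by
  rw [Nat.le_div_iff_mul_le h, mul_comm]
  exact Nat.div_mul_le_self n k

private lemma div_div_div (n k : ℕ) (h : 0 < n / k) : n / (n / (n / k)) = n / k := by
  have hk : 0 < k := by
    rcases Nat.eq_zero_or_pos k with h0 | h0
    · simp [h0] at h
    · exact h0
  have h1 : k ≤ n / (n / k) := le_div_div n k h
  have h2 : 0 < n / (n / k) := lt_of_lt_of_le hk h1
  exact le_antisymm (Nat.div_le_div_left h1 hk) (le_div_div n (n / k) h2)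

private lemma fq_inv (n d : ℕ) (hd : 0 < d) (h : FloorQuotient d n) : n / (n / d) = d := by
  obtain ⟨k, hk, rfl⟩ := h
  exact div_div_div n k hd

private lemma sqrt_le_div (n d : ℕ) (hd : 0 < d) (hds : d ≤ Nat.sqrt n) :
    Nat.sqrt n ≤ n / d := by
  rw [Nat.le_div_iff_mul_le hd]
  calc Nat.sqrt n * d ≤ Nat.sqrt n * Nat.sqrt n := Nat.mul_le_mul_left _ hds
    _ ≤ n := Nat.sqrt_le n

private lemma div_div_eq_of_le_sqrt (n d : ℕ) (hd : 0 < d) (hds : d ≤ Nat.sqrt n) :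
    n / (n / d) = d := by
  have hs : Nat.sqrt n ≤ n / d := sqrt_le_div n d hd hds
  have hpos : 0 < n / d := lt_of_lt_of_le (lt_of_lt_of_le hd hds) hs
  refine le_antisymm ?_ (le_div_div n d hpos)
  have hlt : n < (d + 1) * (n / d) := by
    have hmod : n % d < d := Nat.mod_lt n hd
    have heq : d * (n / d) + n % d = n := Nat.div_add_mod n d
    have : n % d < n / d := lt_of_lt_of_le hmod (hds.trans hs)
    nlinarith
  have := (Nat.div_lt_iff_lt_mul hpos).mpr hlt
  omega

theorem initial_interval_complementation (n : ℕ) (hn : 0 < n) :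
    let s := Nat.sqrt n
    let Qminus : Set ℕ := {d | 0 < d ∧ FloorQuotient d n ∧ d ≤ s}
    let Qplus : Set ℕ := {d | 0 < d ∧ FloorQuotient d n ∧ n / d ≤ s}
    ({d : ℕ | 0 < d ∧ FloorQuotient d n} = Qminus ∪ Qplus) ∧
    Set.BijOn (fun d => n / d) Qplus Qminus ∧
    Set.BijOn (fun d => n / d) Qminus Qplus ∧
    (Qminus = Set.Icc 1 s) ∧
    (Qplus = (fun k => n / k) '' Set.Icc 1 s) ∧
    (Qminus ∩ Qplus = if n < s * (s + 1) then {s} else (∅ : Set ℕ)) := by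
  intro s Qminus Qplus
  have hs1 : 1 ≤ s := Nat.sqrt_pos.mpr hn
  have hss : s * s ≤ n := Nat.sqrt_le n
  have hlt : n < (s + 1) * (s + 1) := Nat.lt_succ_sqrt n
  -- d ≤ n for floor quotients
  have hdle : ∀ d : ℕ, FloorQuotient d n → d ≤ n := by
    rintro d ⟨k, hk, rfl⟩; exact Nat.div_le_self n k
  -- maps to
  have hmt1 : Set.MapsTo (fun d => n / d) Qplus Qminus := by
    rintro d ⟨hd, hfq, hle⟩
    have hdn : d ≤ n := hdle d hfq
    have hpos : 0 < n / d := Nat.div_pos hdn hd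
    exact ⟨hpos, ⟨d, hd, rfl⟩, hle⟩
  have hmt2 : Set.MapsTo (fun d => n / d) Qminus Qplus := by
    rintro d ⟨hd, hfq, hle⟩
    have hs' : s ≤ n / d := sqrt_le_div n d hd hle
    have hpos : 0 < n / d := lt_of_lt_of_le hs1 hs'
    refine ⟨hpos, ⟨d, hd, rfl⟩, ?_⟩
    simp only
    rw [fq_inv n d hd hfq]
    exact hle
  have hinv : Set.InvOn (fun d => n / d) (fun d => n / d) Qplus Qminus := by
    constructor
    · rintro d ⟨hd, hfq, _⟩; exact fq_inv n d hd hfq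
    · rintro d ⟨hd, hfq, _⟩; exact fq_inv n d hd hfq
  refine ⟨?_, hinv.bijOn hmt1 hmt2, hinv.symm.bijOn hmt2 hmt1, ?_, ?_, ?_⟩
  · ext d
    simp only [Set.mem_setOf_eq, Set.mem_union]
    constructor
    · rintro ⟨hd, hfq⟩
      by_cases h : d ≤ s
      · exact Or.inl ⟨hd, hfq, h⟩
      · refine Or.inr ⟨hd, hfq, ?_⟩
        by_contra h2
        push_neg at h h2
        have h3 : (s + 1) * (s + 1) ≤ d * (n / d) :=
          Nat.mul_le_mul h (h2)
        have h4 : d * (n / d) ≤ n := Nat.mul_div_le n d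
        omega
    · rintro (⟨hd, hfq, _⟩ | ⟨hd, hfq, _⟩) <;> exact ⟨hd, hfq⟩
  · ext d
    simp only [Set.mem_setOf_eq, Set.mem_Icc]
    constructor
    · rintro ⟨hd, _, hle⟩; exact ⟨hd, hle⟩
    · rintro ⟨hd, hle⟩
      refine ⟨hd, ⟨n / d, ?_, (div_div_eq_of_le_sqrt n d hd hle).symm⟩, hle⟩
      exact lt_of_lt_of_le hs1 (sqrt_le_div n d hd hle)
  · ext d
    simp only [Set.mem_setOf_eq, Set.mem_image, Set.mem_Icc]
    constructor
    · rintro ⟨hd, hfq, hle⟩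
      refine ⟨n / d, ⟨Nat.div_pos (hdle d hfq) hd, hle⟩, fq_inv n d hd hfq⟩
    · rintro ⟨k, ⟨hk, hks⟩, rfl⟩
      have hsd : s ≤ n / k := sqrt_le_div n k hk hks
      refine ⟨lt_of_lt_of_le hs1 hsd, ⟨k, hk, rfl⟩, ?_⟩
      rw [div_div_eq_of_le_sqrt n k hk hks]
      exact hks
  · have key : ∀ d, d ∈ Qminus ∩ Qplus → d = s ∧ n / s = s := by
      rintro d ⟨⟨hd, hfq, hle⟩, ⟨_, _, hle2⟩⟩
      have hsd : s ≤ n / d := sqrt_le_div n d hd hle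
      have hnd : n / d = s := le_antisymm hle2 hsd
      have hds : d = s := by
        by_contra hne
        have hdlt : d < s := lt_of_le_of_ne hle hne
        have h1 : n < (s + 1) * d := (Nat.div_lt_iff_lt_mul hd).mp (by omega)
        nlinarith
      exact ⟨hds, hds ▸ hnd⟩
    split_ifs with hcase
    · ext d
      simp only [Set.mem_singleton_iff]
      constructor
      · exact fun h => (key d h).1
      · rintro rfl
        have hns : n / s = s := by
          have h1 : s ≤ n / s := sqrt_le_div n s hs1 le_rfl
          have h2 : n / s < s + 1 := by
            rw [Nat.div_lt_iff_lt_mul hs1]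
            nlinarith
          omega
        exact ⟨⟨hs1, ⟨s, hs1, hns.symm⟩, le_rfl⟩, ⟨hs1, ⟨s, hs1, hns.symm⟩, le_of_eq hns⟩⟩
    · ext d
      simp only [Set.mem_empty_iff_false, iff_false]
      intro h
      obtain ⟨rfl, hns⟩ := key d h
      push_neg at hcase
      have : s + 1 ≤ n / s := by
        rw [Nat.le_div_iff_mul_le hs1]
        nlinarith
      omega
end

section
/- Let n be a positive integer. For all integers i, j with 1 ≤ i, j ≤ ⌊√n⌋, one has ⌊n/j⌋ ≼₁ ⌊n/i⌋ if and only if i divides j. Consequently the map k ↦ ⌊n/k⌋ defines an anti-isomorphism of posets from the set {1, 2, …, ⌊√n⌋} equipped with the divisibility order onto the set {⌊n/k⌋ : 1 ≤ k ≤ ⌊√n⌋} equipped with the floor quotient order. -/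
lemma key_le (n a b : ℕ) (ha : 1 ≤ a) (hs : a ≤ Nat.sqrt n) (hb : 1 ≤ b)
    (h : n / a = n / b) : b ≤ a := by
  by_contra hab
  push_neg at hab
  set q := n / a with hq
  have hqa : a ≤ q := by
    rw [hq, Nat.le_div_iff_mul_le (by omega)]
    calc a * a ≤ Nat.sqrt n * Nat.sqrt n := Nat.mul_le_mul hs hs
    _ ≤ n := by have h := Nat.sqrt_le' n; rwa [pow_two] at h
  have h1 : q * b ≤ n := by
    rw [h]; exact Nat.div_mul_le_self n b
  have h2 : n < (q + 1) * a := by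
    have h3 : a * q + n % a = n := by rw [hq]; exact Nat.div_add_mod n a
    have h4 := Nat.mod_lt n (show 0 < a by omega)
    nlinarith
  nlinarith

theorem upper_interval_anti_isomorphic_to_divisor_order (n : ℕ) (hn : 0 < n) :
    (∀ i j : ℕ, 1 ≤ i → i ≤ Nat.sqrt n → 1 ≤ j → j ≤ Nat.sqrt n →
      (FloorQuotient (n / j) (n / i) ↔ i ∣ j)) ∧
    Set.InjOn (fun k => n / k) (Set.Icc 1 (Nat.sqrt n)) ∧
    Set.SurjOn (fun k => n / k) (Set.Icc 1 (Nat.sqrt n))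
      {d : ℕ | 0 < d ∧ FloorQuotient d n ∧ n / d ≤ Nat.sqrt n} := by
  refine ⟨?_, ?_, ?_⟩
  · intro i j hi his hj hjs
    constructor
    · rintro ⟨k, hk, heq⟩
      rw [Nat.div_div_eq_div_mul] at heq
      have hik : 1 ≤ i * k := Nat.one_le_iff_ne_zero.mpr (by positivity)
      have h1 : i * k ≤ j := key_le n j (i * k) hj hjs hik heq
      have h2 : j ≤ i * k := key_le n (i * k) j hik (h1.trans hjs) hj heq.symm
      exact ⟨k, by omega⟩
    · rintro ⟨m, rfl⟩
      have hm : 0 < m := Nat.pos_of_ne_zero fun h => by subst h; simp at hj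
      exact ⟨m, hm, by rw [Nat.div_div_eq_div_mul]⟩
  · intro a ha b hb h
    simp only [Set.mem_Icc] at ha hb
    simp only at h
    have := key_le n a b ha.1 ha.2 hb.1 h
    have := key_le n b a hb.1 hb.2 ha.1 h.symm
    omega
  · rintro d ⟨hd, ⟨k, hk, rfl⟩, hds⟩
    have hkn : k ≤ n := by
      by_contra hkn
      push_neg at hkn
      have : n / k = 0 := Nat.div_eq_of_lt hkn
      omega
    have hdn : n / k ≤ n := Nat.div_le_self n k
    have hm1 : 1 ≤ n / (n / k) := (Nat.one_le_div_iff hd).mpr hdn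
    refine ⟨n / (n / k), ⟨hm1, hds⟩, ?_⟩
    simp only
    -- show n / (n / (n/k)) = n / k
    have hkm : k ≤ n / (n / k) := Nat.le_div_iff_mul_le hd |>.mpr
      (by rw [Nat.mul_comm]; exact Nat.div_mul_le_self n k)
    have h1 : n / (n / (n / k)) ≤ n / k := Nat.div_le_div_left hkm hk
    have h2 : n / k ≤ n / (n / (n / k)) := Nat.le_div_iff_mul_le (by omega) |>.mpr
      (by rw [Nat.mul_comm]; exact Nat.div_mul_le_self n (n / k))
    omega
end

section
/- Let n be a positive integer, and let Q⁻(n) = {d : d ≼₁ n, d ≤ √n} and Q⁺(n) = {d : d ≼₁ n, ⌊n/d⌋ ≤ √n}. Then: (a) if d, e ∈ Q⁺(n) with d ≼₁ e, then ⌊n/e⌋ ≼₁ ⌊n/d⌋; (b) if d, e ∈ Q⁻(n) with d ≼₁ e and d ≠ e, then ⌊n/d⌋ is not a floor quotient of ⌊n/e⌋; that is, the map d ↦ ⌊n/d⌋ is order-reversing from Q⁺(n) to Q⁻(n) and never-order-preserving from Q⁻(n) to Q⁺(n). -/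
/-- If `e` is a positive floor quotient of `n` and `q = n / e`, then `n < q * (e + 1)`. -/
lemma fq_lt_aux (n e : ℕ) (he : 0 < e) (hfe : FloorQuotient e n) :
    n < (n / e) * (e + 1) := by
  obtain ⟨b, hb, hbe⟩ := hfe
  have hen : e ≤ n := hbe ▸ Nat.div_le_self n b
  have hq : 0 < n / e := Nat.div_pos hen he
  -- b ≤ n / e
  have hbq : b ≤ n / e := by
    rw [Nat.le_div_iff_mul_le he, Nat.mul_comm]
    calc e * b = n / b * b := by rw [hbe]
    _ ≤ n := Nat.div_mul_le_self n b
  -- n / (n / e) ≤ e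
  have h1 : n / (n / e) ≤ e := by
    calc n / (n / e) ≤ n / b := Nat.div_le_div_left hbq hb
    _ = e := hbe.symm
  have h2 : n / (n / e) < e + 1 := Nat.lt_succ_of_le h1
  rw [Nat.div_lt_iff_lt_mul hq] at h2
  linarith [h2]

theorem involution_order_reversing_on_large_never_preserving_on_small
    (n : ℕ) (hn : 0 < n) :
    -- (a) order-reversing from Q⁺(n) to Q⁻(n)
    (∀ d e : ℕ, 0 < d → FloorQuotient d n → n / d ≤ Nat.sqrt n →
      0 < e → FloorQuotient e n → n / e ≤ Nat.sqrt n →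
      FloorQuotient d e → FloorQuotient (n / e) (n / d)) ∧
    -- (b) never-order-preserving from Q⁻(n) to Q⁺(n)
    (∀ d e : ℕ, 0 < d → FloorQuotient d n → d ≤ Nat.sqrt n →
      0 < e → FloorQuotient e n → e ≤ Nat.sqrt n →
      FloorQuotient d e → d ≠ e → ¬ FloorQuotient (n / d) (n / e)) := by
  set s := Nat.sqrt n with hs
  have hss : s * s ≤ n := Nat.sqrt_le n
  constructor
  · -- part (a)
    intro d e hd hdn hdQ he hen heQ hde
    obtain ⟨j, hj, hdej⟩ := hde
    set q := n / e with hqdef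
    have hen' : e ≤ n := by
      obtain ⟨b, hb, hbe⟩ := hen
      exact hbe ▸ Nat.div_le_self n b
    have hq0 : 0 < q := Nat.div_pos hen' he
    -- key: n < q * (e+1)
    have hkey : n < q * (e + 1) := fq_lt_aux n e he hen
    -- d * j ≤ e
    have hdj_le : d * j ≤ e := by
      rw [hdej]; exact Nat.div_mul_le_self e j
    have hdj0 : 0 < d * j := Nat.mul_pos hd hj
    -- e < (d+1) * j, i.e. e + 1 ≤ d*j + j
    have he_lt : e < (d + 1) * j := by
      have : e / j < d + 1 := by rw [← hdej]; exact Nat.lt_succ_self d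
      exact (Nat.div_lt_iff_lt_mul hj).mp this
    have he_lt' : e < d * j + j := by rw [Nat.succ_mul] at he_lt; exact he_lt
    -- n < (s+1)*d  from n/d ≤ s
    have hnd : n < (s + 1) * d := by
      have : n / d < s + 1 := Nat.lt_succ_of_le hdQ
      rw [Nat.div_lt_iff_lt_mul hd] at this
      linarith
    -- q * j ≤ s
    have hqj : q * j ≤ s := by
      by_contra h
      push_neg at h
      have h1 : (s + 1) * d ≤ q * j * d := Nat.mul_le_mul_right d h
      have h2 : q * j * d ≤ q * e := by
        have := Nat.mul_le_mul_left q hdj_le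
        calc q * j * d = q * (d * j) := by ring
        _ ≤ q * e := this
      have h3 : q * e ≤ n := by
        rw [hqdef]
        exact Nat.div_mul_le_self n e
      omega
    -- s ≤ d
    have hsd : s ≤ d := by
      by_contra h
      push_neg at h
      have : (s + 1) * d ≤ (s + 1) * s := by
        apply Nat.mul_le_mul_left
        omega
      nlinarith
    -- conclude: n / (d * j) = n / e
    refine ⟨j, hj, ?_⟩
    rw [Nat.div_div_eq_div_mul]
    have hge : q ≤ n / (d * j) := Nat.div_le_div_left hdj_le hdj0
    have hle : n / (d * j) ≤ q := by
      have h1 : n < q * (d * j + j) := by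
        calc n < q * (e + 1) := hkey
        _ ≤ q * (d * j + j) := Nat.mul_le_mul_left q (by omega)
      have h1' : n < q * (d * j) + q * j := by rw [← Nat.mul_add]; exact h1
      have h2 : q * j ≤ d * j := by
        calc q * j ≤ s := hqj
        _ ≤ d := hsd
        _ ≤ d * j := Nat.le_mul_of_pos_right d hj
      have h3 : n < (q + 1) * (d * j) := by
        rw [Nat.succ_mul]
        linarith
      have h4 : n / (d * j) < q + 1 := (Nat.div_lt_iff_lt_mul hdj0).mpr h3
      omega
    rw [hqdef] at hle
    exact le_antisymm hge hle
  · -- part (b)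
    intro d e hd hdn hdQ he hen heQ hde hne hcon
    obtain ⟨j, hj, hdej⟩ := hde
    have hdle : d ≤ e := hdej ▸ Nat.div_le_self e j
    have hdlt : d < e := lt_of_le_of_ne hdle hne
    have hen' : e ≤ n := by
      obtain ⟨b, hb, hbe⟩ := hen
      exact hbe ▸ Nat.div_le_self n b
    -- e ≤ n / e
    have hee : e * e ≤ n := Nat.le_sqrt.mp heQ
    have heq : e ≤ n / e := (Nat.le_div_iff_mul_le he).mpr hee
    -- strict: n / e < n / d
    have hstrict : n / e < n / d := by
      have : n / e + 1 ≤ n / d := by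
        rw [Nat.le_div_iff_mul_le hd]
        have h1 : (n / e + 1) * d ≤ (n / e + 1) * (e - 1) :=
          Nat.mul_le_mul_left _ (by omega)
        have h2 : (n / e) * e ≤ n := by
          rw [Nat.mul_comm]; exact Nat.mul_div_le n e
        have h3 : (n / e + 1) * (e - 1) ≤ n / e * e := by
          obtain ⟨e', rfl⟩ : ∃ e', e = e' + 1 := ⟨e - 1, by omega⟩
          simp only [Nat.add_sub_cancel]
          have : e' + 1 ≤ n / (e' + 1) := heq
          nlinarith
        omega
      omega
    obtain ⟨k, hk, hcd⟩ := hcon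
    rw [Nat.div_div_eq_div_mul] at hcd
    -- k = 1 impossible
    have hk2 : 2 ≤ k := by
      rcases Nat.lt_or_ge k 2 with h | h
      · exfalso
        have hk1 : k = 1 := by omega
        rw [hk1, Nat.mul_one] at hcd
        omega
      · exact h
    -- n/d = n/(e*k) ≤ n/(2e)
    have h2e : 0 < 2 * e := by omega
    have hle2 : n / (e * k) ≤ n / (2 * e) := by
      apply Nat.div_le_div_left _ h2e
      calc 2 * e = e * 2 := by ring
      _ ≤ e * k := Nat.mul_le_mul_left e hk2
    -- but n/(2e) < n/d
    have hlt2 : n / (2 * e) < n / d := by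
      have : n / (2 * e) + 1 ≤ n / d := by
        rw [Nat.le_div_iff_mul_le hd]
        have hq2 : (n / (2 * e)) * (2 * e) ≤ n := Nat.div_mul_le_self n (2 * e)
        have hq2' : (n / (2 * e)) * e ≤ n / 2 := by
          rw [Nat.le_div_iff_mul_le (by norm_num : (0:ℕ) < 2)]
          calc n / (2 * e) * e * 2 = n / (2 * e) * (2 * e) := by ring
          _ ≤ n := hq2
        -- e ≤ n - n/2
        have hse : s ≤ n - n / 2 := by
          rcases Nat.lt_or_ge s 2 with h | h
          · omega
          · have : 2 * s ≤ s * s := by nlinarith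
            omega
        have heub : e ≤ n - n / 2 := le_trans heQ hse
        have : (n / (2 * e) + 1) * d ≤ (n / (2 * e) + 1) * e :=
          Nat.mul_le_mul_left _ (le_of_lt hdlt)
        have hh : (n / (2 * e) + 1) * e = n / (2 * e) * e + e := by ring
        omega
      omega
    omega
end

section
/- Let α₀ be a real number greater than 1 satisfying ∑_{k=1}^∞ k^{−α₀} = 2 (numerically α₀ ≈ 1.729). For positive integers d and n, let C(d,n) denote the number of chains from d to n in the floor quotient order, i.e. the number of finite strictly increasing sequences d = a₀ ≺₁ a₁ ≺₁ ⋯ ≺₁ a_j = n (so C(n,n) = 1 and C(d,n) = 0 when d is not a floor quotient of n). Then for all positive integers d and n, C(d,n) ≤ (n/d)^{α₀}. -/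
/-- The number of chains `d = a₀ ≺₁ a₁ ≺₁ ⋯ ≺₁ a_j = n` in the floor quotient
order, encoded as lists which are strictly increasing chains for `≺₁`,
starting at `d` and ending at `n`. -/
noncomputable def chainCount (d n : ℕ) : ℕ :=
  {l : List ℕ | l.Chain' (fun a b => FloorQuotient a b ∧ a ≠ b) ∧
    l.head? = some d ∧ l.getLast? = some n}.ncard

namespace ChainAux

/-- The set of chains from `d` to `n`. -/
def CS (d n : ℕ) : Set (List ℕ) :=
  {l : List ℕ | l.Chain' (fun a b => FloorQuotient a b ∧ a ≠ b) ∧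
    l.head? = some d ∧ l.getLast? = some n}

lemma chainCount_eq (d n : ℕ) : chainCount d n = (CS d n).ncard := rfl

lemma fq_lt {a b : ℕ} (h : FloorQuotient a b ∧ a ≠ b) : a < b := by
  obtain ⟨⟨k, hk, hak⟩, hne⟩ := h
  exact lt_of_le_of_ne (hak ▸ Nat.div_le_self b k) hne

lemma pairwise_of_mem {d n : ℕ} {l : List ℕ} (h : l ∈ CS d n) :
    l.Pairwise (· < ·) := by
  have := (h.1.imp (fun _ _ hab => fq_lt hab))
  exact List.isChain_iff_pairwise.mp this

lemma head_le_mem {l : List ℕ} {a x : ℕ} (h : l.Pairwise (· < ·))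
    (hh : l.head? = some a) (hx : x ∈ l) : a ≤ x := by
  cases l with
  | nil => simp at hx
  | cons b t =>
    simp only [List.head?_cons, Option.some.injEq] at hh
    subst hh
    rcases List.mem_cons.mp hx with rfl | hxt
    · exact le_refl _
    · exact le_of_lt ((List.pairwise_cons.mp h).1 x hxt)

lemma mem_le_getLast {l : List ℕ} {n x : ℕ} (h : l.Pairwise (· < ·))
    (hl : l.getLast? = some n) (hx : x ∈ l) : x ≤ n := by
  have hne : l ≠ [] := by rintro rfl; simp at hl
  have hdec : l.dropLast ++ [n] = l :=
    List.dropLast_append_getLast? n (by simpa using hl)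
  rw [← hdec] at h hx
  rcases List.mem_append.mp hx with hx1 | hx2
  · exact le_of_lt ((List.pairwise_append.mp h).2.2 x hx1 n (by simp))
  · simp at hx2; omega

lemma finite_CS (d n : ℕ) : (CS d n).Finite := by
  have hsub : CS d n ⊆ {l : List ℕ | l.Pairwise (· < ·) ∧ ∀ x ∈ l, x ≤ n} := by
    intro l hl
    have hp := pairwise_of_mem hl
    exact ⟨hp, fun x hx => mem_le_getLast hp hl.2.2 hx⟩
  apply Set.Finite.subset _ hsub
  have himg : (List.toFinset '' {l : List ℕ | l.Pairwise (· < ·) ∧ ∀ x ∈ l, x ≤ n}).Finite := by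
    apply Set.Finite.subset (Finset.range (n + 1)).powerset.finite_toSet
    rintro s ⟨l, hl, rfl⟩
    simp only [Finset.coe_powerset, Set.mem_preimage, Set.mem_powerset_iff]
    intro x hx
    simp only [Finset.coe_range, Set.mem_Iio]
    have := hl.2 x (by simpa using hx)
    omega
  apply Set.Finite.of_finite_image himg
  intro l₁ h₁ l₂ h₂ heq
  haveI : IsAntisymm ℕ (· < ·) := ⟨fun a b h h' => absurd h' (Nat.lt_asymm h)⟩
  have hn₁ : l₁.Nodup := h₁.1.imp (fun h => ne_of_lt h)
  have hn₂ : l₂.Nodup := h₂.1.imp (fun h => ne_of_lt h)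
  exact List.Perm.eq_of_sortedLE h₁.1.sortedLT.sortedLE h₂.1.sortedLT.sortedLE
    (List.perm_of_nodup_nodup_toFinset_eq hn₁ hn₂ heq)

lemma CS_self (n : ℕ) : CS n n = {[n]} := by
  ext l
  constructor
  · rintro ⟨hch, hh, hl⟩
    match l with
    | [] => simp at hh
    | [a] =>
      simp only [List.head?_cons, Option.some.injEq] at hh
      simp [hh]
    | a :: b :: t =>
      exfalso
      have hp := pairwise_of_mem (d := n) (n := n) ⟨hch, hh, hl⟩
      simp only [List.head?_cons, Option.some.injEq] at hh
      have hl' : (b :: t).getLast? = some n := by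
        rw [← hl]; exact (List.getLast?_cons_cons ..).symm
      have hnm : n ∈ b :: t := by
        obtain ⟨h', rfl⟩ := List.mem_getLast?_eq_getLast (by simpa using hl')
        exact List.getLast_mem h'
      have := (List.pairwise_cons.mp hp).1 n hnm
      omega
  · rintro rfl
    exact ⟨List.isChain_singleton n, rfl, rfl⟩

lemma ncard_biUnion_le {α ι : Type*} (s : Finset ι) (f : ι → Set α) :
    (⋃ i ∈ s, f i).ncard ≤ ∑ i ∈ s, (f i).ncard := by
  induction s using Finset.cons_induction with
  | empty => simp
  | cons a s ha ih =>
    rw [Finset.sum_cons]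
    have : (⋃ i ∈ Finset.cons a s ha, f i) = f a ∪ ⋃ i ∈ s, f i := by
      simp [Set.iUnion_or, Set.iUnion_union_distrib]
    rw [this]
    exact le_trans (Set.ncard_union_le _ _) (by omega)

lemma CS_subset_biUnion {d n : ℕ} (hd : 0 < d) (hdn : d ≠ n) :
    CS d n ⊆ ⋃ k ∈ Finset.Icc 2 n, (fun l : List ℕ => l ++ [n]) '' CS d (n / k) := by
  intro l hl
  obtain ⟨hch, hh, hlast⟩ := hl
  have hne : l ≠ [] := by rintro rfl; simp at hh
  have hdec : l.dropLast ++ [n] = l :=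
    List.dropLast_append_getLast? n (by simpa using hlast)
  have hne' : l.dropLast ≠ [] := by
    intro h
    rw [h, List.nil_append] at hdec
    rw [← hdec] at hh
    simp at hh
    exact hdn hh.symm
  rw [← hdec] at hch
  obtain ⟨hc1, _, hrel⟩ := List.isChain_append.mp hch
  set m := l.dropLast.getLast hne' with hm
  have hml : l.dropLast.getLast? = some m := List.getLast?_eq_getLast_of_ne_nil hne'
  have hR : FloorQuotient m n ∧ m ≠ n := hrel m (by simpa using hml) n (by simp)
  have hh' : l.dropLast.head? = some d := by
    rw [← hdec] at hh
    rwa [List.head?_append_of_ne_nil _ hne'] at hh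
  have hpw : l.dropLast.Pairwise (· < ·) :=
    List.isChain_iff_pairwise.mp (hc1.imp (fun _ _ hab => fq_lt hab))
  have hdm : d ≤ m := head_le_mem hpw hh' (List.getLast_mem hne')
  obtain ⟨⟨k, hk, hmk⟩, hmn⟩ := hR
  have hk2 : 2 ≤ k := by
    rcases Nat.lt_or_ge k 2 with h | h
    · interval_cases k
      simp at hmk; omega
    · exact h
  have hkn : k ≤ n := by
    by_contra h
    push_neg at h
    rw [Nat.div_eq_of_lt h] at hmk
    omega
  refine Set.mem_iUnion₂.mpr ⟨k, Finset.mem_Icc.mpr ⟨hk2, hkn⟩, ?_⟩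
  exact ⟨l.dropLast, ⟨hc1, hh', by rw [hml, hmk]⟩, hdec⟩

end ChainAux

theorem chain_count_upper_bound (α₀ : ℝ) (hα : 1 < α₀)
    (hsum : ∑' k : ℕ+, (k : ℝ) ^ (-α₀) = 2)
    (d n : ℕ) (hd : 0 < d) (hn : 0 < n) :
    (chainCount d n : ℝ) ≤ ((n : ℝ) / d) ^ α₀ := by
  -- transfer the sum hypothesis to ℕ
  set g : ℕ → ℝ := fun j => ((j + 1 : ℕ) : ℝ) ^ (-α₀) with hg
  have hgsum : ∑' j : ℕ, g j = 2 := by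
    rw [← hsum]
    rw [← Equiv.pnatEquivNat.symm.tsum_eq (fun k : ℕ+ => (k : ℝ) ^ (-α₀))]
    apply tsum_congr
    intro j
    simp [hg, Equiv.pnatEquivNat]
  have hgsummable : Summable g := by
    by_contra h
    rw [tsum_eq_zero_of_not_summable h] at hgsum
    norm_num at hgsum
  have hgnonneg : ∀ j, 0 ≤ g j := fun j => Real.rpow_nonneg (by positivity) _
  have hg0 : g 0 = 1 := by simp [hg]
  -- the key finite sum bound
  have hsum_le : ∀ N : ℕ, ∑ k ∈ Finset.Icc 2 N, ((k : ℝ)) ^ (-α₀) ≤ 1 := by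
    intro N
    have hre : ∑ k ∈ Finset.Icc 2 N, ((k : ℝ)) ^ (-α₀) = ∑ j ∈ Finset.Icc 1 (N - 1), g j := by
      apply Finset.sum_nbij' (fun k => k - 1) (fun j => j + 1)
      · intro a ha; simp only [Finset.mem_Icc] at *; omega
      · intro a ha; simp only [Finset.mem_Icc] at *; omega
      · intro a ha; simp only [Finset.mem_Icc] at ha; omega
      · intro a ha; simp only [Finset.mem_Icc] at ha; omega
      · intro a ha
        simp only [Finset.mem_Icc] at ha
        simp only [hg]
        congr 2
        omega
    rw [hre]
    have hins : insert 0 (Finset.Icc 1 (N - 1)) = Finset.Icc 0 (N - 1) := by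
      ext x; simp; omega
    have h1 : g 0 + ∑ j ∈ Finset.Icc 1 (N - 1), g j = ∑ j ∈ Finset.Icc 0 (N - 1), g j := by
      rw [← hins, Finset.sum_insert (by simp)]
    have h2 : ∑ j ∈ Finset.Icc 0 (N - 1), g j ≤ 2 := by
      rw [← hgsum]
      exact Summable.sum_le_tsum _ (fun i _ => hgnonneg i) hgsummable
    rw [hg0] at h1
    linarith
  -- strong induction on n
  revert hn
  induction n using Nat.strong_induction_on with
  | _ n IH =>
  intro hn
  by_cases hdn : d = n
  · subst hdn
    rw [ChainAux.chainCount_eq, ChainAux.CS_self, Set.ncard_singleton]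
    have : (d : ℝ) / d = 1 := div_self (by positivity)
    rw [this, Real.one_rpow]
    norm_num
  · have hA : (0 : ℝ) < (n : ℝ) / d := by positivity
    have hstep : chainCount d n ≤ ∑ k ∈ Finset.Icc 2 n, chainCount d (n / k) := by
      rw [ChainAux.chainCount_eq]
      have hfin : (⋃ k ∈ Finset.Icc 2 n, (fun l : List ℕ => l ++ [n]) '' ChainAux.CS d (n / k)).Finite :=
        Set.Finite.biUnion (Finset.Icc 2 n).finite_toSet
          (fun k _ => (ChainAux.finite_CS d (n / k)).image _)
      calc (ChainAux.CS d n).ncard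
          ≤ (⋃ k ∈ Finset.Icc 2 n, (fun l : List ℕ => l ++ [n]) '' ChainAux.CS d (n / k)).ncard :=
            Set.ncard_le_ncard (ChainAux.CS_subset_biUnion hd hdn) hfin
        _ ≤ ∑ k ∈ Finset.Icc 2 n, ((fun l : List ℕ => l ++ [n]) '' ChainAux.CS d (n / k)).ncard :=
            ChainAux.ncard_biUnion_le _ _
        _ ≤ ∑ k ∈ Finset.Icc 2 n, (ChainAux.CS d (n / k)).ncard :=
            Finset.sum_le_sum (fun k _ => Set.ncard_image_le (ChainAux.finite_CS d (n / k)))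
        _ = ∑ k ∈ Finset.Icc 2 n, chainCount d (n / k) := by
            simp [ChainAux.chainCount_eq]
    have hcast : (chainCount d n : ℝ) ≤ ∑ k ∈ Finset.Icc 2 n, (chainCount d (n / k) : ℝ) := by
      exact_mod_cast hstep
    have hterm : ∀ k ∈ Finset.Icc 2 n,
        (chainCount d (n / k) : ℝ) ≤ ((n : ℝ) / d) ^ α₀ * (k : ℝ) ^ (-α₀) := by
      intro k hk
      rw [Finset.mem_Icc] at hk
      have hk0 : 0 < k := by omega
      have hm1 : 1 ≤ n / k := (Nat.one_le_div_iff hk0).mpr hk.2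
      have hmn : n / k < n := Nat.div_lt_self hn (by omega)
      have hIH' : (chainCount d (n / k) : ℝ) ≤ (((n / k : ℕ) : ℝ) / d) ^ α₀ := by
        simpa using IH (n / k) hmn (by omega)
      refine le_trans hIH' ?_
      have hb1 : ((n / k : ℕ) : ℝ) / d ≤ ((n : ℝ) / d) * (k : ℝ)⁻¹ := by
        have h1 : ((n / k : ℕ) : ℝ) ≤ (n : ℝ) / k := Nat.cast_div_le
        have hd0 : (0 : ℝ) < d := by positivity
        rw [div_le_iff₀ hd0] at *
        calc ((n / k : ℕ) : ℝ) ≤ (n : ℝ) / k := h1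
          _ = (n : ℝ) / d * (k : ℝ)⁻¹ * d := by field_simp
      have hrw : (((n : ℝ) / d) * (k : ℝ)⁻¹) ^ α₀ = ((n : ℝ) / d) ^ α₀ * (k : ℝ) ^ (-α₀) := by
        rw [Real.mul_rpow (le_of_lt hA) (by positivity), Real.rpow_neg (by positivity),
          ← Real.inv_rpow (by positivity)]
      rw [← hrw]
      exact Real.rpow_le_rpow (by positivity) hb1 (by linarith)
    calc (chainCount d n : ℝ)
        ≤ ∑ k ∈ Finset.Icc 2 n, (chainCount d (n / k) : ℝ) := hcast
      _ ≤ ∑ k ∈ Finset.Icc 2 n, ((n : ℝ) / d) ^ α₀ * (k : ℝ) ^ (-α₀) :=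
          Finset.sum_le_sum hterm
      _ = ((n : ℝ) / d) ^ α₀ * ∑ k ∈ Finset.Icc 2 n, (k : ℝ) ^ (-α₀) := by
          rw [Finset.mul_sum]
      _ ≤ ((n : ℝ) / d) ^ α₀ * 1 :=
          mul_le_mul_of_nonneg_left (hsum_le n) (le_of_lt (Real.rpow_pos_of_pos hA _))
      _ = ((n : ℝ) / d) ^ α₀ := mul_one _
end

section
/- For all positive integers d and n, the floor quotient interval Q[d,n] = {e ∈ ℕ⁺ : d ≼₁ e and e ≼₁ n} has cardinality at most (3/2)·(n/d)^{2/3}. -/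
lemma gauss_sum (m : ℕ) : (∑ j ∈ Finset.Icc 1 m, j) * 2 = m * (m + 1) := by
  induction m with
  | zero => simp
  | succ k ih =>
    rw [Finset.sum_Icc_succ_top (by omega), add_mul, ih]
    ring

lemma key_ineq (m : ℕ) (t : ℝ) (hm : 1 ≤ m) (h1 : (m : ℝ) ≤ t) (h2 : t ≤ (m : ℝ) + 1) :
    t ^ 3 / ((m : ℝ) + 1) + (m : ℝ) * ((m : ℝ) + 1) / 2 ≤ 3 / 2 * t ^ 2 := by
  have hm1 : (1 : ℝ) ≤ (m : ℝ) := by exact_mod_cast hm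
  have hmp : (0 : ℝ) < (m : ℝ) + 1 := by linarith
  have heq : t ^ 3 / ((m : ℝ) + 1) + (m : ℝ) * ((m : ℝ) + 1) / 2
      = (2 * t ^ 3 + (m : ℝ) * ((m : ℝ) + 1) ^ 2) / (2 * ((m : ℝ) + 1)) := by
    field_simp
  rw [heq, div_le_iff₀ (by positivity)]
  nlinarith [mul_nonneg (sub_nonneg.2 h1) (sub_nonneg.2 h2),
    mul_nonneg (mul_nonneg (sub_nonneg.2 h1) (sub_nonneg.2 h1)) (sub_nonneg.2 h2),
    mul_nonneg (mul_nonneg (sub_nonneg.2 h1) (sub_nonneg.2 h2)) (sub_nonneg.2 hm1),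
    mul_nonneg (sub_nonneg.2 hm1) (sub_nonneg.2 h1)]

theorem interval_size_upper_bound (d n : ℕ) (hd : 0 < d) (hn : 0 < n) :
    ({e : ℕ | FloorQuotient d e ∧ FloorQuotient e n}.ncard : ℝ) ≤
      (3 / 2) * ((n : ℝ) / d) ^ ((2 : ℝ) / 3) := by
  set S := {e : ℕ | FloorQuotient d e ∧ FloorQuotient e n} with hS
  by_cases hdn : n < d
  · have hempty : S = ∅ := by
      ext e
      simp only [hS, Set.mem_setOf_eq, Set.mem_empty_iff_false, iff_false, not_and]
      rintro ⟨j, hj, hdj⟩ ⟨k, hk, hek⟩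
      have h1 : d ≤ e := hdj ▸ Nat.div_le_self e j
      have h2 : e ≤ n := hek ▸ Nat.div_le_self n k
      omega
    rw [hempty]
    simp only [Set.ncard_empty, Nat.cast_zero]
    positivity
  push_neg at hdn
  set x : ℝ := (n : ℝ) / d with hx
  have hdpos : (0 : ℝ) < (d : ℝ) := by exact_mod_cast hd
  have hx1 : (1 : ℝ) ≤ x := by
    rw [hx, le_div_iff₀ hdpos, one_mul]
    exact_mod_cast hdn
  have hx0 : (0 : ℝ) ≤ x := by linarith
  set t : ℝ := x ^ ((1 : ℝ) / 3) with htdef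
  have ht1 : (1 : ℝ) ≤ t := Real.one_le_rpow hx1 (by norm_num)
  set m : ℕ := ⌊t⌋₊ with hm
  have hm1 : 1 ≤ m := Nat.le_floor (by simpa using ht1)
  have hmt : (m : ℝ) ≤ t := Nat.floor_le (by linarith)
  have htm : t ≤ (m : ℝ) + 1 := (Nat.lt_floor_add_one t).le
  set K : ℕ := n / (d * (m + 1)) with hK
  set F : Finset ℕ := (Finset.Icc 1 K).image (fun k => n / k) ∪
      (Finset.Icc 1 m).biUnion (fun j => Finset.Ico (d * j) (d * j + j)) with hF
  have hsub : S ⊆ ↑F := by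
    rintro e ⟨⟨j, hj, hdj⟩, ⟨k, hk, hek⟩⟩
    simp only [hF, Finset.coe_union, Set.mem_union, Finset.coe_image, Set.mem_image,
      Finset.mem_coe, Finset.mem_Icc, Finset.mem_biUnion, Finset.mem_Ico]
    by_cases hkK : k ≤ K
    · left
      exact ⟨k, by simpa using ⟨hk, hkK⟩, hek.symm⟩
    · right
      push_neg at hkK
      have he_le : e ≤ n / (K + 1) := hek ▸ Nat.div_le_div_left hkK (Nat.succ_pos K)
      have hdj_le : d * j ≤ e := by
        rw [hdj]; exact Nat.div_mul_le_self e j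
      have he_lt : e < d * j + j := by
        have h1 : e / j < d + 1 := by omega
        have := (Nat.div_lt_iff_lt_mul hj).1 h1
        calc e < (d + 1) * j := this
          _ = d * j + j := by ring
      have hj_le : j ≤ m := by
        have h1 : j ≤ e / d := (Nat.le_div_iff_mul_le hd).2 (by rwa [mul_comm] at hdj_le)
        have h2 : e / d ≤ n / (K + 1) / d := Nat.div_le_div_right he_le
        have h3 : n / (K + 1) / d = n / ((K + 1) * d) := Nat.div_div_eq_div_mul n (K + 1) d
        have h4 : n < (K + 1) * (d * (m + 1)) := by
          have := (Nat.div_lt_iff_lt_mul (show 0 < d * (m + 1) by positivity)).1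
            (show n / (d * (m + 1)) < K + 1 from hK ▸ Nat.lt_succ_self K)
          exact this
        have h5 : n < (m + 1) * ((K + 1) * d) := by
          have : (K + 1) * (d * (m + 1)) = (m + 1) * ((K + 1) * d) := by ring
          omega
        have h6 : n / ((K + 1) * d) < m + 1 :=
          (Nat.div_lt_iff_lt_mul (by positivity)).2 h5
        omega
      exact ⟨j, ⟨hj, hj_le⟩, hdj_le, he_lt⟩
  have hcard1 : S.ncard ≤ F.card := by
    have := Set.ncard_le_ncard hsub F.finite_toSet
    rwa [Set.ncard_coe_finset] at this
  have hcard2 : F.card ≤ K + ∑ j ∈ Finset.Icc 1 m, j := by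
    refine (Finset.card_union_le _ _).trans (add_le_add ?_ ?_)
    · exact (Finset.card_image_le).trans (by simp [Nat.card_Icc])
    · refine (Finset.card_biUnion_le).trans ?_
      refine Finset.sum_le_sum fun j _ => ?_
      simp [Nat.card_Ico]
  have hKreal : (K : ℝ) ≤ x / ((m : ℝ) + 1) := by
    have h1 : (K : ℝ) ≤ (n : ℝ) / ((d * (m + 1) : ℕ) : ℝ) := by
      rw [hK]; exact Nat.cast_div_le
    have h2 : ((d * (m + 1) : ℕ) : ℝ) = (d : ℝ) * ((m : ℝ) + 1) := by push_cast; ring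
    rw [h2] at h1
    rw [hx, div_div] at *
    exact h1
  have hsum : ((∑ j ∈ Finset.Icc 1 m, j : ℕ) : ℝ) = (m : ℝ) * ((m : ℝ) + 1) / 2 := by
    have := gauss_sum m
    have h : ((∑ j ∈ Finset.Icc 1 m, j : ℕ) : ℝ) * 2 = (m : ℝ) * ((m : ℝ) + 1) := by
      exact_mod_cast congrArg (Nat.cast : ℕ → ℝ) this
    linarith
  have ht3 : t ^ 3 = x := by
    rw [htdef, ← Real.rpow_natCast (x ^ ((1:ℝ)/3)) 3, ← Real.rpow_mul hx0]
    norm_num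
  have ht2 : x ^ ((2 : ℝ) / 3) = t ^ 2 := by
    rw [htdef, ← Real.rpow_natCast (x ^ ((1:ℝ)/3)) 2, ← Real.rpow_mul hx0]
    norm_num
  have hfinal : (S.ncard : ℝ) ≤ (K : ℝ) + (m : ℝ) * ((m : ℝ) + 1) / 2 := by
    have h1 : (S.ncard : ℝ) ≤ ((K + ∑ j ∈ Finset.Icc 1 m, j : ℕ) : ℝ) := by
      exact_mod_cast hcard1.trans hcard2
    rw [Nat.cast_add, hsum] at h1
    exact h1
  calc (S.ncard : ℝ) ≤ (K : ℝ) + (m : ℝ) * ((m : ℝ) + 1) / 2 := hfinal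
    _ ≤ x / ((m : ℝ) + 1) + (m : ℝ) * ((m : ℝ) + 1) / 2 := by linarith
    _ = t ^ 3 / ((m : ℝ) + 1) + (m : ℝ) * ((m : ℝ) + 1) / 2 := by rw [ht3]
    _ ≤ 3 / 2 * t ^ 2 := key_ineq m t hm1 hmt htm
    _ = (3 / 2) * x ^ ((2 : ℝ) / 3) := by rw [ht2]
end

section
/- Fix a positive integer n. For all integers k, ℓ with 1 ≤ ℓ ≤ k ≤ ⌊√n⌋, the Möbius function μ₁ of the floor quotient partial order satisfies μ₁(⌊n/k⌋, ⌊n/ℓ⌋) = μ(k/ℓ) if ℓ divides k, and μ₁(⌊n/k⌋, ⌊n/ℓ⌋) = 0 if ℓ does not divide k, where μ denotes the classical number-theoretic Möbius function. In particular |μ₁(⌊n/k⌋, ⌊n/ℓ⌋)| ≤ 1 for all such k, ℓ. -/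
section FQaux

variable {n : ℕ}

private lemma fq_sqrt_le_div (hn : 0 < n) {k : ℕ} (hk : 0 < k) (hks : k ≤ n.sqrt) :
    n.sqrt ≤ n / k := by
  calc n.sqrt ≤ n / n.sqrt := by
        rw [Nat.le_div_iff_mul_le (Nat.sqrt_pos.mpr hn)]
        exact Nat.sqrt_le n
    _ ≤ n / k := Nat.div_le_div_left hks hk

private lemma fq_div_lt_div (hn : 0 < n) {a b : ℕ} (ha : 0 < a) (hab : a < b)
    (hb : b ≤ n.sqrt) : n / b < n / a := by
  have hb0 : 0 < b := lt_trans ha hab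
  have hq : b ≤ n / b := le_trans hb (fq_sqrt_le_div hn hb0 hb)
  have h1 : n / b * b ≤ n := Nat.div_mul_le_self n b
  rw [Nat.lt_iff_add_one_le, Nat.le_div_iff_mul_le ha]
  nlinarith

private lemma fq_div_inj (hn : 0 < n) {a b : ℕ} (ha : 0 < a) (hb : 0 < b)
    (has : a ≤ n.sqrt) (hbs : b ≤ n.sqrt) (h : n / a = n / b) : a = b := by
  rcases lt_trichotomy a b with hlt | heq | hgt
  · exact absurd h (Nat.ne_of_gt (fq_div_lt_div hn ha hlt hbs))
  · exact heq
  · exact absurd h (Nat.ne_of_lt (fq_div_lt_div hn hb hgt has))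

/-- Key descending lemma: if `n/k ≤ n/j` with `k ≤ √n`, then `j ≤ k ≤ √n`. -/
private lemma fq_rep (hn : 0 < n) {j k : ℕ} (hj : 0 < j) (hk : 0 < k) (hks : k ≤ n.sqrt)
    (hle : n / k ≤ n / j) : j ≤ n.sqrt ∧ j ≤ k := by
  have hs : 0 < n.sqrt := Nat.sqrt_pos.mpr hn
  have hjs : j ≤ n.sqrt := by
    by_contra hgt
    push_neg at hgt
    -- then n / j ≤ sqrt n
    have h1 : n / j ≤ n / (n.sqrt + 1) := Nat.div_le_div_left hgt (Nat.succ_pos _)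
    have h2 : n / (n.sqrt + 1) < n.sqrt + 1 := by
      apply Nat.div_lt_of_lt_mul
      have := Nat.lt_succ_sqrt' n
      simpa [pow_two] using this
    have hbig : n.sqrt ≤ n / k := fq_sqrt_le_div hn hk hks
    -- so n / k = n / j = sqrt n
    have hkeq : n / k = n.sqrt := le_antisymm (le_trans hle (by omega)) hbig
    have hseq : n / n.sqrt = n.sqrt := by
      have hge := fq_sqrt_le_div hn hs (le_refl _)
      have hle2 : n / n.sqrt ≤ n / k := Nat.div_le_div_left hks hk
      omega
    -- sqrt n ≤ n / j  gives  sqrt n * j ≤ n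
    have h3 : n.sqrt * j ≤ n := by
      rw [← Nat.le_div_iff_mul_le hj]; omega
    have h4 : n < (n.sqrt + 1) * n.sqrt := by
      rw [← Nat.div_lt_iff_lt_mul hs]; omega
    nlinarith
  refine ⟨hjs, ?_⟩
  by_contra hgt
  push_neg at hgt
  exact absurd hle (not_le.mpr (fq_div_lt_div hn hk hgt hjs))

/-- Claim A: for `j ≤ k ≤ √n`, `n/k` is a floor quotient of `n/j` iff `j ∣ k`. -/
private lemma fq_iff_s16 (hn : 0 < n) {j k : ℕ} (hj : 0 < j) (hjk : j ≤ k) (hks : k ≤ n.sqrt) :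
    FloorQuotient (n / k) (n / j) ↔ j ∣ k := by
  have hk : 0 < k := lt_of_lt_of_le hj hjk
  constructor
  · rintro ⟨m, hm, hEq⟩
    rw [Nat.div_div_eq_div_mul] at hEq
    have hjm : 0 < j * m := Nat.mul_pos hj hm
    have h1 := fq_rep hn hjm hk hks (le_of_eq hEq)
    have h2 := fq_rep hn hk hjm (le_trans h1.2 hks) (le_of_eq hEq.symm)
    have : k = j * m := le_antisymm h2.2 h1.2
    exact ⟨m, this⟩
  · rintro ⟨m, rfl⟩
    have hm : 0 < m := Nat.pos_of_mul_pos_left (by rwa [mul_comm] at hk)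
    exact ⟨m, hm, by rw [Nat.div_div_eq_div_mul]⟩

end FQaux

open scoped Classical in
theorem mobius_on_upper_interval (μ₁ : ℕ → ℕ → ℤ)
    -- defining properties of the Möbius function of the floor quotient order
    (hrefl : ∀ d : ℕ, 0 < d → μ₁ d d = 1)
    (hzero : ∀ d n : ℕ, 0 < d → 0 < n → ¬ FloorQuotient d n → μ₁ d n = 0)
    (hrec : ∀ d n : ℕ, 0 < d → FloorQuotient d n → d ≠ n →
      ∑ e ∈ (Finset.Icc d n).filter
        (fun e => FloorQuotient d e ∧ FloorQuotient e n), μ₁ d e = 0)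
    (n : ℕ) (hn : 0 < n) :
    ∀ k ℓ : ℕ, 1 ≤ ℓ → ℓ ≤ k → k ≤ Nat.sqrt n →
      (ℓ ∣ k → μ₁ (n / k) (n / ℓ) = ArithmeticFunction.moebius (k / ℓ)) ∧
      (¬ ℓ ∣ k → μ₁ (n / k) (n / ℓ) = 0) ∧
      |μ₁ (n / k) (n / ℓ)| ≤ 1 := by
  have hs : 0 < n.sqrt := Nat.sqrt_pos.mpr hn
  -- positivity of the quotients
  have hpos : ∀ k : ℕ, 0 < k → k ≤ n.sqrt → 0 < n / k := fun k hk hks =>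
    lt_of_lt_of_le hs (fq_sqrt_le_div hn hk hks)
  -- the interval identification (Claim B)
  have hinterval : ∀ k ℓ : ℕ, 0 < ℓ → ℓ ≤ k → k ≤ n.sqrt →
      (Finset.Icc (n/k) (n/ℓ)).filter
        (fun e => FloorQuotient (n/k) e ∧ FloorQuotient e (n/ℓ))
      = (k.divisors.filter (fun j => ℓ ∣ j)).image (fun j => n / j) := by
    intro k ℓ hl hlk hks
    have hk : 0 < k := lt_of_lt_of_le hl hlk
    ext e
    simp only [Finset.mem_filter, Finset.mem_image, Finset.mem_Icc, Nat.mem_divisors]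
    constructor
    · rintro ⟨⟨h1, h2⟩, hde, m, hm, rfl⟩
      rw [Nat.div_div_eq_div_mul] at *
      have hlm : 0 < ℓ * m := Nat.mul_pos hl hm
      have hle : n / k ≤ n / (ℓ * m) := by
        obtain ⟨t, ht, hEq⟩ := hde
        rw [hEq]; exact Nat.div_le_self _ _
      obtain ⟨hlms, hlmk⟩ := fq_rep hn hlm hk hks hle
      have hdvd : (ℓ * m) ∣ k := (fq_iff_s16 hn hlm hlmk hks).mp hde
      exact ⟨ℓ * m, ⟨⟨hdvd, hk.ne'⟩, Dvd.intro m rfl⟩, rfl⟩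
    · rintro ⟨j, ⟨⟨hjk, -⟩, hlj⟩, rfl⟩
      have hj : 0 < j := Nat.pos_of_dvd_of_pos hjk hk
      have hjk' : j ≤ k := Nat.le_of_dvd hk hjk
      have hlj' : ℓ ≤ j := Nat.le_of_dvd hj hlj
      refine ⟨⟨Nat.div_le_div_left hjk' hj, Nat.div_le_div_left hlj' hl⟩,
        (fq_iff_s16 hn hj hjk' hks).mpr hjk, ?_⟩
      refine ⟨j / ℓ, Nat.div_pos hlj' hl, ?_⟩
      rw [Nat.div_div_eq_div_mul, Nat.mul_div_cancel' hlj]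
  -- the main divisibility computation, by strong induction on k / ℓ
  have hmain : ∀ m : ℕ, ∀ k ℓ : ℕ, 0 < ℓ → ℓ ≤ k → k ≤ n.sqrt → k = ℓ * m →
      μ₁ (n / k) (n / ℓ) = ArithmeticFunction.moebius m := by
    intro m
    induction m using Nat.strong_induction_on with
    | _ m ih =>
      intro k ℓ hl hlk hks hkm
      have hk : 0 < k := lt_of_lt_of_le hl hlk
      have hm : 0 < m := by
        rcases Nat.eq_zero_or_pos m with h | h
        · subst h; omega
        · exact h
      rcases Nat.lt_or_ge m 2 with hm1 | hm2
      · -- m = 1, so k = ℓ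
        have : m = 1 := by omega
        subst this
        rw [mul_one] at hkm
        subst hkm
        rw [hrefl _ (hpos k hk hks), ArithmeticFunction.moebius_apply_one]
      · -- m ≥ 2
        have hlk' : ℓ < k := by
          subst hkm; nlinarith
        have hne : n / k ≠ n / ℓ :=
          Nat.ne_of_lt (fq_div_lt_div hn hl hlk' hks)
        have hfq : FloorQuotient (n / k) (n / ℓ) :=
          (fq_iff_s16 hn hl (le_of_lt hlk') hks).mpr ⟨m, hkm⟩
        have hsum := hrec (n / k) (n / ℓ) (hpos k hk hks) hfq hne
        rw [hinterval k ℓ hl hlk hks] at hsum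
        rw [Finset.sum_image (fun a ha b hb h => by
          simp only [Finset.mem_coe, Finset.mem_filter, Nat.mem_divisors] at ha hb
          exact fq_div_inj hn (Nat.pos_of_dvd_of_pos ha.1.1 hk)
            (Nat.pos_of_dvd_of_pos hb.1.1 hk)
            (le_trans (Nat.le_of_dvd hk ha.1.1) hks)
            (le_trans (Nat.le_of_dvd hk hb.1.1) hks) h)] at hsum
        -- D = divisors of k that are multiples of ℓ
        set D := k.divisors.filter (fun j => ℓ ∣ j) with hD
        have hlD : ℓ ∈ D := by
          simp only [hD, Finset.mem_filter, Nat.mem_divisors]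
          exact ⟨⟨⟨m, hkm⟩, hk.ne'⟩, dvd_refl ℓ⟩
        -- split off the j = ℓ term
        rw [← Finset.add_sum_erase D _ hlD] at hsum
        -- identify the remaining terms by induction
        have hterm : ∀ j ∈ D.erase ℓ,
            μ₁ (n / k) (n / j) = ArithmeticFunction.moebius (k / j) := by
          intro j hj
          simp only [Finset.mem_erase, hD, Finset.mem_filter, Nat.mem_divisors] at hj
          obtain ⟨hjne, ⟨hjk, -⟩, hlj⟩ := hj
          have hjpos : 0 < j := Nat.pos_of_dvd_of_pos hjk hk
          have hljlt : ℓ < j := lt_of_le_of_ne (Nat.le_of_dvd hjpos hlj) (Ne.symm hjne)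
          have hjle : j ≤ k := Nat.le_of_dvd hk hjk
          have hlt : k / j < m := by
            obtain ⟨u, rfl⟩ := hlj
            have hu : 1 < u := by nlinarith
            have heq : k / (ℓ * u) = m / u := by
              rw [hkm, Nat.mul_div_mul_left _ _ hl]
            rw [heq]
            exact Nat.div_lt_self hm hu
          exact ih (k / j) hlt k j hjpos hjle hks
            (by rw [Nat.mul_div_cancel' hjk])
        rw [Finset.sum_congr rfl hterm] at hsum
        -- now compute the moebius sum over D.erase ℓ
        have hDimg : D = m.divisors.image (fun u => ℓ * u) := by
          ext j
          simp only [hD, Finset.mem_filter, Nat.mem_divisors, Finset.mem_image]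
          constructor
          · rintro ⟨⟨hjk, -⟩, u, rfl⟩
            refine ⟨u, ⟨?_, hm.ne'⟩, rfl⟩
            rw [hkm] at hjk
            exact (mul_dvd_mul_iff_left hl.ne').mp hjk
          · rintro ⟨u, ⟨hum, -⟩, rfl⟩
            exact ⟨⟨by rw [hkm]; exact mul_dvd_mul_left ℓ hum, hk.ne'⟩,
              Dvd.intro u rfl⟩
        have hDsum : ∑ j ∈ D, (ArithmeticFunction.moebius (k / j) : ℤ) = 0 := by
          rw [hDimg, Finset.sum_image (fun a _ b _ h =>
            Nat.eq_of_mul_eq_mul_left hl h)]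
          have : ∀ u ∈ m.divisors,
              (ArithmeticFunction.moebius (k / (ℓ * u)) : ℤ)
              = ArithmeticFunction.moebius (m / u) := by
            intro u hu
            rw [hkm, Nat.mul_div_mul_left _ _ hl]
          rw [Finset.sum_congr rfl this, Nat.sum_div_divisors]
          have h1 : ((ArithmeticFunction.moebius * (ArithmeticFunction.zeta : ArithmeticFunction ℕ) : ArithmeticFunction ℤ)) m
              = ∑ u ∈ m.divisors, ArithmeticFunction.moebius u :=
            ArithmeticFunction.coe_mul_zeta_apply
          rw [ArithmeticFunction.moebius_mul_coe_zeta] at h1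
          rw [← h1, ArithmeticFunction.one_apply_ne (by omega)]
        have hDsplit : (ArithmeticFunction.moebius (k / ℓ) : ℤ)
            + ∑ j ∈ D.erase ℓ, (ArithmeticFunction.moebius (k / j) : ℤ)
            = ∑ j ∈ D, (ArithmeticFunction.moebius (k / j) : ℤ) :=
          Finset.add_sum_erase D (fun j => (ArithmeticFunction.moebius (k / j) : ℤ)) hlD
        have hklm : k / ℓ = m := by rw [hkm, Nat.mul_div_cancel_left _ hl]
        rw [hklm] at hDsplit
        linarith [hsum, hDsplit, hDsum]
  intro k ℓ h1 h2 h3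
  have hl : 0 < ℓ := h1
  constructor
  · intro hdvd
    exact hmain (k / ℓ) k ℓ hl h2 h3 (Nat.mul_div_cancel' hdvd).symm
  constructor
  · intro hndvd
    exact hzero _ _ (hpos k (lt_of_lt_of_le hl h2) h3) (hpos ℓ hl (le_trans h2 h3))
      (fun h => hndvd ((fq_iff_s16 hn hl h2 h3).mp h))
  · by_cases hdvd : ℓ ∣ k
    · rw [hmain (k / ℓ) k ℓ hl h2 h3 (Nat.mul_div_cancel' hdvd).symm]
      exact ArithmeticFunction.abs_moebius_le_one
    · rw [hzero _ _ (hpos k (lt_of_lt_of_le hl h2) h3) (hpos ℓ hl (le_trans h2 h3))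
        (fun h => hdvd ((fq_iff_s16 hn hl h2 h3).mp h))]
      simp
end

section
/- Let α₀ be a real number greater than 1 satisfying ∑_{k=1}^∞ k^{−α₀} = 2 (numerically α₀ ≈ 1.729). Then the Möbius function μ₁ of the floor quotient partial order satisfies |μ₁(d,n)| ≤ (n/d)^{α₀} for all positive integers d and n. -/
open scoped Classical in
theorem mobius_polynomial_upper_bound (α₀ : ℝ) (hα : 1 < α₀)
    (hzeta : ∑' k : ℕ+, (k : ℝ) ^ (-α₀) = 2)
    (μ₁ : ℕ → ℕ → ℤ)
    -- defining properties of the Möbius function of the floor quotient order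
    (hrefl : ∀ d : ℕ, 0 < d → μ₁ d d = 1)
    (hzero : ∀ d n : ℕ, 0 < d → 0 < n → ¬ FloorQuotient d n → μ₁ d n = 0)
    (hrec : ∀ d n : ℕ, 0 < d → FloorQuotient d n → d ≠ n →
      ∑ e ∈ (Finset.Icc d n).filter
        (fun e => FloorQuotient d e ∧ FloorQuotient e n), μ₁ d e = 0)
    (d n : ℕ) (hd : 0 < d) (hn : 0 < n) :
    (|μ₁ d n| : ℝ) ≤ ((n : ℝ) / d) ^ α₀ := by
  have hdR : (0:ℝ) < (d:ℝ) := by exact_mod_cast hd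
  have hsummable : Summable (fun k : ℕ+ => (k : ℝ) ^ (-α₀)) := by
    by_contra h
    rw [tsum_eq_zero_of_not_summable h] at hzeta
    norm_num at hzeta
  have htail : ∀ K : Finset ℕ+, (1 : ℕ+) ∉ K →
      ∑ k ∈ K, (k : ℝ) ^ (-α₀) ≤ 1 := by
    intro K h1
    have hins : ∑ k ∈ insert (1:ℕ+) K, (k : ℝ) ^ (-α₀)
        = 1 + ∑ k ∈ K, (k : ℝ) ^ (-α₀) := by
      rw [Finset.sum_insert h1]
      norm_num
    have hle : ∑ k ∈ insert (1:ℕ+) K, (k : ℝ) ^ (-α₀) ≤ 2 := by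
      rw [← hzeta]
      exact Summable.sum_le_tsum _
        (fun i _ => Real.rpow_nonneg (by positivity) _) hsummable
    linarith [hins ▸ hle]
  revert hn
  induction n using Nat.strong_induction_on with
  | _ n IH =>
  intro hn
  by_cases hdn : d = n
  · subst hdn
    rw [hrefl d hd, div_self (ne_of_gt hdR), Real.one_rpow]
    norm_num
  by_cases hfq : FloorQuotient d n
  swap
  · rw [hzero d n hd hn hfq]
    simpa using Real.rpow_nonneg (by positivity : (0:ℝ) ≤ (n:ℝ)/d) α₀
  obtain ⟨k0, hk0, hdk0⟩ := hfq
  have hdle : d ≤ n := hdk0 ▸ Nat.div_le_self n k0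
  set S := (Finset.Icc d n).filter
      (fun e => FloorQuotient d e ∧ FloorQuotient e n) with hS
  have hnS : n ∈ S := by
    rw [hS, Finset.mem_filter, Finset.mem_Icc]
    exact ⟨⟨hdle, le_refl n⟩, ⟨k0, hk0, hdk0⟩, ⟨1, by norm_num⟩⟩
  have hsum0 := hrec d n hd ⟨k0, hk0, hdk0⟩ hdn
  rw [← hS] at hsum0
  have hμ : μ₁ d n = -∑ e ∈ S.erase n, μ₁ d e := by
    have h2 := Finset.sum_erase_add S (μ₁ d) hnS
    rw [hsum0] at h2
    linarith
  set T := S.erase n with hT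
  have hTprop : ∀ e ∈ T, d ≤ e ∧ e < n ∧ FloorQuotient d e ∧ FloorQuotient e n := by
    intro e he
    rw [hT, Finset.mem_erase, hS, Finset.mem_filter, Finset.mem_Icc] at he
    exact ⟨he.2.1.1, lt_of_le_of_ne he.2.1.2 he.1, he.2.2⟩
  have hwit : ∀ e ∈ T, ∃ k : ℕ, 2 ≤ k ∧ e = n / k := by
    intro e he
    obtain ⟨_, hlt, _, ⟨k, hk, hek⟩⟩ := hTprop e he
    refine ⟨k, ?_, hek⟩
    by_contra h
    have hk1 : k = 1 := by omega
    rw [hk1, Nat.div_one] at hek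
    omega
  let g : ℕ → ℕ := fun e => if h : ∃ k : ℕ, 2 ≤ k ∧ e = n / k then h.choose else 2
  have hg : ∀ e ∈ T, 2 ≤ g e ∧ e = n / g e := by
    intro e he
    have h := hwit e he
    simp only [g, dif_pos h]
    exact ⟨h.choose_spec.1, h.choose_spec.2⟩
  -- per-element bound
  have hstep : ∀ e ∈ T, ((e:ℝ)/d) ^ α₀ ≤ ((n:ℝ)/d) ^ α₀ * ((g e : ℝ)) ^ (-α₀) := by
    intro e he
    obtain ⟨h2, hek⟩ := hg e he
    have hkpos : (0:ℝ) < (g e : ℝ) := by positivity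
    have hle : (e:ℝ) ≤ (n:ℝ) / (g e : ℝ) := by
      have h' : ((n / g e : ℕ):ℝ) ≤ (n:ℝ) / (g e : ℝ) := Nat.cast_div_le
      rw [← hek] at h'
      exact h'
    have hle2 : (e:ℝ)/d ≤ ((n:ℝ)/(g e : ℝ))/d := by gcongr
    calc ((e:ℝ)/d) ^ α₀ ≤ (((n:ℝ)/(g e : ℝ))/d) ^ α₀ :=
          Real.rpow_le_rpow (by positivity) hle2 (by linarith)
      _ = ((n:ℝ)/d) ^ α₀ * ((g e : ℝ)) ^ (-α₀) := by
          rw [Real.rpow_neg (le_of_lt hkpos), ← Real.inv_rpow (le_of_lt hkpos),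
            ← Real.mul_rpow (by positivity) (by positivity)]
          congr 1
          rw [div_div, mul_comm ((g e : ℝ)) (d:ℝ), ← div_div, div_eq_mul_inv]
  -- build the finset of witnesses in ℕ+
  let G : {x // x ∈ T} → ℕ+ := fun e => ⟨g e.1, by have := (hg e.1 e.2).1; omega⟩
  have hGinj : ∀ x ∈ T.attach, ∀ y ∈ T.attach, G x = G y → x = y := by
    intro x _ y _ hxy
    have hgxy : g x.1 = g y.1 := congrArg PNat.val hxy
    have hx := (hg x.1 x.2).2
    have hy := (hg y.1 y.2).2
    exact Subtype.ext (by rw [hx, hy, hgxy])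
  have hK1 : (1 : ℕ+) ∉ T.attach.image G := by
    intro h
    obtain ⟨e, _, hGe⟩ := Finset.mem_image.mp h
    have : g e.1 = 1 := congrArg PNat.val hGe
    have := (hg e.1 e.2).1
    omega
  have hsumK : ∑ e ∈ T, ((g e : ℝ)) ^ (-α₀) ≤ 1 := by
    have heq : ∑ k ∈ T.attach.image G, ((k : ℕ+) : ℝ) ^ (-α₀)
        = ∑ e ∈ T.attach, ((G e : ℝ)) ^ (-α₀) := Finset.sum_image hGinj
    have heq2 : ∑ e ∈ T.attach, ((G e : ℝ)) ^ (-α₀)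
        = ∑ e ∈ T, ((g e : ℝ)) ^ (-α₀) := by
      exact Finset.sum_attach T (fun e => ((g e : ℝ)) ^ (-α₀))
    rw [← heq2, ← heq]
    exact htail _ hK1
  -- put everything together
  rw [hμ]
  push_cast
  rw [abs_neg]
  calc |∑ e ∈ T, (μ₁ d e : ℝ)| ≤ ∑ e ∈ T, |(μ₁ d e : ℝ)| :=
        Finset.abs_sum_le_sum_abs _ _
    _ ≤ ∑ e ∈ T, ((e:ℝ)/d) ^ α₀ := by
        refine Finset.sum_le_sum (fun e he => ?_)
        obtain ⟨hde, hlt, _, _⟩ := hTprop e he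
        have := IH e hlt (lt_of_lt_of_le hd hde)
        exact_mod_cast this
    _ ≤ ∑ e ∈ T, ((n:ℝ)/d) ^ α₀ * ((g e : ℝ)) ^ (-α₀) :=
        Finset.sum_le_sum hstep
    _ = ((n:ℝ)/d) ^ α₀ * ∑ e ∈ T, ((g e : ℝ)) ^ (-α₀) := by
        rw [Finset.mul_sum]
    _ ≤ ((n:ℝ)/d) ^ α₀ * 1 := by
        refine mul_le_mul_of_nonneg_left hsumK (Real.rpow_nonneg (by positivity) _)
    _ = ((n:ℝ)/d) ^ α₀ := mul_one _
end

section
/- There exists a strictly increasing sequence of integers ℓ₁ = 2 < ℓ₂ < ℓ₃ < ⋯ such that for each j ≥ 1, (−1)^j · μ₁(1, ℓⱼ) > 0 and ℓ_{j+1} ≤ 2·ℓⱼ² − 2, where μ₁ is the Möbius function of the floor quotient partial order. Consequently the function n ↦ μ₁(1,n) has infinitely many sign changes. -/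
open scoped Classical

/-- Every `v` with `v * v ≤ n` is a floor quotient of `n`. -/
lemma fq_of_sq_le {v n : ℕ} (hv : 0 < v) (h : v * v ≤ n) : FloorQuotient v n := by
  have hk : v ≤ n / v := (Nat.le_div_iff_mul_le hv).2 h
  refine ⟨n / v, by omega, ?_⟩
  have h1 := Nat.div_add_mod n v
  have h2 : n % v < v := Nat.mod_lt n hv
  have e1 : v * (n / v) ≤ n := by omega
  have e2 : n < (v + 1) * (n / v) := by rw [Nat.succ_mul]; omega
  exact (Nat.div_eq_of_lt_le e1 e2).symm

/-- Floor quotients are preserved by doubling. -/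
lemma fq_double {v n : ℕ} (h : FloorQuotient v n) : FloorQuotient v (2 * n) := by
  obtain ⟨k, hk, he⟩ := h
  exact ⟨2 * k, by omega, by rw [Nat.mul_div_mul_left n k (by norm_num)]; exact he⟩

/-- `ℓ` is not a floor quotient of `ℓ² - 1` (for `ℓ ≥ 2`). -/
lemma not_fq_sq_sub_one {ℓ : ℕ} (hℓ : 2 ≤ ℓ) : ¬ FloorQuotient ℓ (ℓ ^ 2 - 1) := by
  rintro ⟨k, hk, he⟩
  rw [pow_two] at he
  have h1 : ℓ * k ≤ ℓ * ℓ - 1 := (Nat.le_div_iff_mul_le hk).1 he.le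
  have h2 : ℓ * ℓ - 1 < (ℓ + 1) * k := (Nat.div_lt_iff_lt_mul hk).1 (by omega)
  have hkl : k < ℓ := by
    by_contra hc
    have : ℓ * ℓ ≤ ℓ * k := Nat.mul_le_mul_left ℓ (by omega)
    have h4 : 4 ≤ ℓ * ℓ := Nat.mul_le_mul hℓ hℓ
    omega
  have h3 : ℓ * (k + 1) ≤ ℓ * ℓ := Nat.mul_le_mul_left ℓ (by omega)
  rw [Nat.mul_add, Nat.add_mul, one_mul, mul_one] at *
  omega

/-- The floor-quotient set of `n`, as a finset. -/
noncomputable def Qset (n : ℕ) : Finset ℕ :=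
  (Finset.Icc 1 n).filter (fun e => FloorQuotient e n)

lemma mem_Qset {v n : ℕ} : v ∈ Qset n ↔ (1 ≤ v ∧ v ≤ n ∧ FloorQuotient v n) := by
  simp [Qset, Finset.mem_filter, Finset.mem_Icc, and_assoc]

/-- Key step: if `f ℓ` has sign `ε` then some `m ∈ (ℓ, 2ℓ²-2]` has `ε * f m < 0`. -/
lemma key_step (f : ℕ → ℤ)
    (hQ : ∀ n, 2 ≤ n → ∑ e ∈ Qset n, f e = 0)
    (ℓ : ℕ) (hℓ : 2 ≤ ℓ) (ε : ℤ) (hsign : 0 < ε * f ℓ) :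
    ∃ m, ℓ < m ∧ m ≤ 2 * ℓ ^ 2 - 2 ∧ ε * f m < 0 := by
  by_contra hcon
  push_neg at hcon
  -- arithmetic setup
  have hll : 4 ≤ ℓ * ℓ := Nat.mul_le_mul hℓ hℓ
  have h2l : 2 * ℓ ≤ ℓ * ℓ := Nat.mul_le_mul_right ℓ hℓ
  set n₁ := ℓ ^ 2 - 1 with hn₁
  have hn₁' : n₁ + 1 = ℓ * ℓ := by rw [hn₁, pow_two]; omega
  have hn₂ : 2 * ℓ ^ 2 - 2 = 2 * n₁ := by rw [hn₁, pow_two]; omega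
  -- B ⊆ A
  have hBA : Qset n₁ ⊆ Qset (2 * n₁) := by
    intro v hv
    rw [mem_Qset] at hv ⊢
    exact ⟨hv.1, by omega, fq_double hv.2.2⟩
  -- sums are zero
  have hA0 : ∑ e ∈ Qset (2 * n₁), f e = 0 := hQ _ (by omega)
  have hB0 : ∑ e ∈ Qset n₁, f e = 0 := hQ _ (by omega)
  have hdiff : ∑ e ∈ Qset (2 * n₁) \ Qset n₁, f e = 0 := by
    have := Finset.sum_sdiff (f := f) hBA
    omega
  -- ℓ is in the difference set
  have hℓA : ℓ ∈ Qset (2 * n₁) := by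
    rw [mem_Qset]
    exact ⟨by omega, by omega, fq_of_sq_le (by omega) (by omega)⟩
  have hℓB : ℓ ∉ Qset n₁ := by
    rw [mem_Qset]
    rintro ⟨-, -, hfq⟩
    exact not_fq_sq_sub_one hℓ (hn₁ ▸ hfq)
  have hℓmem : ℓ ∈ Qset (2 * n₁) \ Qset n₁ := Finset.mem_sdiff.2 ⟨hℓA, hℓB⟩
  -- every element of the difference set is in [ℓ, 2ℓ²-2]
  have hrange : ∀ v ∈ Qset (2 * n₁) \ Qset n₁, ℓ ≤ v ∧ v ≤ 2 * ℓ ^ 2 - 2 := by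
    intro v hv
    rw [Finset.mem_sdiff, mem_Qset] at hv
    obtain ⟨⟨hv1, hv2, hvfq⟩, hvB⟩ := hv
    refine ⟨?_, by omega⟩
    by_contra hc
    push_neg at hc
    apply hvB
    rw [mem_Qset]
    have hvv : v * v < ℓ * ℓ := Nat.mul_lt_mul_of_lt_of_le hc (by omega) (by omega)
    exact ⟨hv1, by omega, fq_of_sq_le (by omega) (by omega)⟩
  -- positivity of the sum: contradiction
  have hpos : 0 < ∑ v ∈ Qset (2 * n₁) \ Qset n₁, ε * f v := by
    refine Finset.sum_pos' ?_ ⟨ℓ, hℓmem, hsign⟩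
    intro v hv
    obtain ⟨hv1, hv2⟩ := hrange v hv
    rcases eq_or_lt_of_le hv1 with rfl | hlt
    · exact le_of_lt hsign
    · exact hcon v hlt hv2
  rw [← Finset.mul_sum, hdiff, mul_zero] at hpos
  exact lt_irrefl 0 hpos

/-- Build an infinite chain by choice. -/
lemma exists_chain (φ : ℕ → ℕ → Prop) (x0 : ℕ) (h0 : φ 0 x0)
    (hstep : ∀ k x, φ k x → ∃ y, φ (k + 1) y ∧ x < y ∧ y ≤ 2 * x ^ 2 - 2) :
    ∃ g : ℕ → ℕ, g 0 = x0 ∧ (∀ k, φ k (g k)) ∧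
      ∀ k, g k < g (k + 1) ∧ g (k + 1) ≤ 2 * (g k) ^ 2 - 2 := by
  let g' : ∀ k : ℕ, {x : ℕ // φ k x} := fun k =>
    Nat.rec ⟨x0, h0⟩
      (fun k p => ⟨(hstep k p.1 p.2).choose, (hstep k p.1 p.2).choose_spec.1⟩) k
  refine ⟨fun k => (g' k).1, rfl, fun k => (g' k).2, fun k => ?_⟩
  have h := (hstep k (g' k).1 (g' k).2).choose_spec
  exact ⟨h.2.1, h.2.2⟩

open scoped Classical in
theorem mobius_sign_changes (μ₁ : ℕ → ℕ → ℤ)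
    -- defining properties of the Möbius function of the floor quotient order
    (hrefl : ∀ d : ℕ, 0 < d → μ₁ d d = 1)
    (hzero : ∀ d n : ℕ, 0 < d → 0 < n → ¬ FloorQuotient d n → μ₁ d n = 0)
    (hrec : ∀ d n : ℕ, 0 < d → FloorQuotient d n → d ≠ n →
      ∑ e ∈ (Finset.Icc d n).filter
        (fun e => FloorQuotient d e ∧ FloorQuotient e n), μ₁ d e = 0) :
    ∃ ℓ : ℕ → ℕ, ℓ 1 = 2 ∧
      (∀ j : ℕ, 1 ≤ j → ℓ j < ℓ (j + 1)) ∧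
      (∀ j : ℕ, 1 ≤ j → ℓ (j + 1) ≤ 2 * (ℓ j) ^ 2 - 2) ∧
      (∀ j : ℕ, 1 ≤ j → 0 < (-1 : ℤ) ^ j * μ₁ 1 (ℓ j)) ∧
      -- consequently, `n ↦ μ₁(1,n)` has infinitely many sign changes
      (∀ N : ℕ, ∃ a b : ℕ, N < a ∧ a < b ∧ μ₁ 1 a * μ₁ 1 b < 0) := by
  set f : ℕ → ℤ := μ₁ 1 with hf
  -- the basic recursion over Qset
  have hQ : ∀ n, 2 ≤ n → ∑ e ∈ Qset n, f e = 0 := by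
    intro n hn
    have h := hrec 1 n one_pos ⟨n, by omega, (Nat.div_self (by omega)).symm⟩ (by omega)
    have hfe : (Finset.Icc 1 n).filter
        (fun e => FloorQuotient 1 e ∧ FloorQuotient e n) = Qset n := by
      rw [Qset]
      refine Finset.filter_congr ?_
      intro e he
      rw [Finset.mem_Icc] at he
      constructor
      · exact fun h => h.2
      · exact fun h => ⟨⟨e, by omega, (Nat.div_self (by omega)).symm⟩, h⟩
    rwa [hfe] at h
  -- μ₁ 1 2 = -1
  have hf1 : f 1 = 1 := hrefl 1 one_pos
  have hf2 : f 2 = -1 := by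
    have h := hQ 2 le_rfl
    have hset : Qset 2 = {1, 2} := by
      apply Finset.ext
      intro v
      rw [mem_Qset]
      constructor
      · rintro ⟨h1, h2, -⟩
        simp only [Finset.mem_insert, Finset.mem_singleton]
        omega
      · intro hv
        simp only [Finset.mem_insert, Finset.mem_singleton] at hv
        rcases hv with rfl | rfl
        · exact ⟨le_rfl, by omega, ⟨2, by omega, by norm_num⟩⟩
        · exact ⟨by omega, le_rfl, ⟨1, by omega, by norm_num⟩⟩
    rw [hset, Finset.sum_insert (by norm_num), Finset.sum_singleton] at h
    omega
  -- the chain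
  set φ : ℕ → ℕ → Prop := fun k x => 2 ≤ x ∧ 0 < (-1 : ℤ) ^ (k + 1) * f x with hφ
  have h0 : φ 0 2 := ⟨le_rfl, by rw [hf2]; norm_num⟩
  have hstep : ∀ k x, φ k x → ∃ y, φ (k + 1) y ∧ x < y ∧ y ≤ 2 * x ^ 2 - 2 := by
    intro k x hx
    obtain ⟨m, hm1, hm2, hm3⟩ := key_step f hQ x hx.1 ((-1 : ℤ) ^ (k + 1)) hx.2
    refine ⟨m, ⟨by omega, ?_⟩, hm1, hm2⟩
    have : (-1 : ℤ) ^ (k + 1 + 1) = -(-1 : ℤ) ^ (k + 1) := by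
      rw [pow_succ]; ring
    rw [this]
    linarith
  obtain ⟨g, hg0, hgφ, hgs⟩ := exists_chain φ 2 h0 hstep
  -- g grows
  have hgrow : ∀ k, k + 2 ≤ g k := by
    intro k
    induction k with
    | zero => omega
    | succ k ih => have := (hgs k).1; omega
  refine ⟨fun j => g (j - 1), by exact hg0, ?_, ?_, ?_, ?_⟩
  · intro j hj
    obtain ⟨i, rfl⟩ : ∃ i, j = i + 1 := ⟨j - 1, by omega⟩
    exact (hgs i).1
  · intro j hj
    obtain ⟨i, rfl⟩ : ∃ i, j = i + 1 := ⟨j - 1, by omega⟩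
    exact (hgs i).2
  · intro j hj
    obtain ⟨i, rfl⟩ : ∃ i, j = i + 1 := ⟨j - 1, by omega⟩
    exact (hgφ i).2
  · intro N
    refine ⟨g (N + 1), g (N + 2), by have := hgrow (N + 1); omega, (hgs (N + 1)).1, ?_⟩
    have h1 := (hgφ (N + 1)).2
    have h2 := (hgφ (N + 2)).2
    have hodd : ((-1 : ℤ)) ^ (N + 1 + 1) * (-1 : ℤ) ^ (N + 2 + 1) = -1 := by
      rw [← pow_add]
      exact Odd.neg_one_pow ⟨N + 2, by ring⟩
    have h3 := mul_pos h1 h2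
    have h4 : ((-1 : ℤ) ^ (N + 1 + 1) * f (g (N + 1))) * ((-1 : ℤ) ^ (N + 2 + 1) * f (g (N + 2)))
        = ((-1 : ℤ) ^ (N + 1 + 1) * (-1 : ℤ) ^ (N + 2 + 1)) * (f (g (N + 1)) * f (g (N + 2))) := by
      ring
    rw [h4, hodd] at h3
    linarith
end

section
/- Define the differenced Möbius function Δμ₁(1,m) = μ₁(1,m) − μ₁(1,m−1) for m ≥ 1 (with the convention μ₁(1,0) = 0), where μ₁ is the Möbius function of the floor quotient partial order. Then for every integer n ≥ 3, the sum of Δμ₁(1,d) over all divisors d of n with d > √n equals 0 if n is neither of the form s² nor s(s+1) for a positive integer s, and equals −μ₁(1,s) if n = s² or n = s(s+1) (in which case s = ⌊√n⌋). -/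
section DMRAux

private lemma dmr_pronic_inj (a b : ℕ) (h : a*(a+1) = b*(b+1)) : a = b := by nlinarith

private lemma dmr_sq_ne_pronic (s t : ℕ) (hs : 1 ≤ s) : s*s ≠ t*(t+1) := by
  intro h
  have h1 : t < s := by
    rw [← Nat.mul_self_lt_mul_self_iff]
    calc t*t < t*(t+1) := by nlinarith
      _ = s*s := h.symm
  have h2 : s*s < (t+1)*(t+1) := by rw [h]; nlinarith
  rw [Nat.mul_self_lt_mul_self_iff] at h2
  omega

private lemma dmr_fq_iff (e n : ℕ) (he : 0 < e) (hen : e ≤ n) :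
    FloorQuotient e n ↔ n / (e+1) < n / e := by
  constructor
  · rintro ⟨k, hk, rfl⟩
    have h1 : k ≤ n / (n/k) := by
      rw [Nat.le_div_iff_mul_le he]
      calc k * (n/k) = n/k * k := mul_comm _ _
        _ ≤ n := Nat.div_mul_le_self n k
    refine lt_of_lt_of_le ?_ h1
    rw [Nat.div_lt_iff_lt_mul (Nat.succ_pos _)]
    calc n = k * (n/k) + n % k := (Nat.div_add_mod n k).symm
      _ < k * (n/k) + k := Nat.add_lt_add_left (Nat.mod_lt _ hk) _
      _ = k * (n/k + 1) := by ring
  · intro h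
    set k := n / e with hkdef
    have hk : 0 < k := lt_of_le_of_lt (Nat.zero_le _) h
    refine ⟨k, hk, ?_⟩
    have h1 : e ≤ n / k := by
      rw [Nat.le_div_iff_mul_le hk]
      calc e * k = n/e * e := by rw [mul_comm]
        _ ≤ n := Nat.div_mul_le_self n e
    have h2 : n / k < e + 1 := by
      rw [Nat.div_lt_iff_lt_mul hk]
      have h3 := (Nat.div_lt_iff_lt_mul (Nat.succ_pos e)).mp h
      calc n < k * (e+1) := h3
        _ = (e+1) * k := mul_comm _ _
    omega

private lemma dmr_pointwise (n e : ℕ) (he : 1 ≤ e) (hen : e ≤ n) (hn : 3 ≤ n) (x : ℤ) :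
    ((if n/(e+1) < n/e then x else 0) - (if (n-1)/(e+1) < (n-1)/e then x else 0))
    = (if e ∣ n ∧ n < e*e then x else 0) + (if n = e*e then x else 0)
      - (if (e+1) ∣ n ∧ n < (e+1)*(e+1) then x else 0) + (if n = e*(e+1) then x else 0) := by
  have he' : 0 < e := he
  have hn1 : n - 1 + 1 = n := by omega
  have hsq : e*e < e*(e+1) := by
    calc e*e < e*e + e := by omega
      _ = e*(e+1) := by ring
  have hde : (n-1)/e + (if e ∣ n then 1 else 0) = n/e := by
    conv_rhs => rw [← hn1]
    rw [Nat.succ_div, hn1]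
  have hde1 : (n-1)/(e+1) + (if (e+1) ∣ n then 1 else 0) = n/(e+1) := by
    conv_rhs => rw [← hn1]
    rw [Nat.succ_div, hn1]
  by_cases hd1 : e ∣ n
  · rw [if_pos hd1] at hde
    obtain ⟨k, hk⟩ := hd1
    have hk1 : 1 ≤ k := by
      rcases Nat.eq_zero_or_pos k with rfl | h
      · simp at hk; omega
      · exact h
    have hnek : n / e = k := by rw [hk, Nat.mul_div_cancel_left _ he']
    have hP1 : n/(e+1) < n/e := by
      rw [hnek, Nat.div_lt_iff_lt_mul (by omega : 0 < e + 1)]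
      calc n = e*k := hk
        _ < e*k + k := by omega
        _ = k*(e+1) := by ring
    by_cases hd2 : (e+1) ∣ n
    · rw [if_pos hd2] at hde1
      have hdd : e*(e+1) ∣ n :=
        (Nat.coprime_self_add_right.mpr (Nat.coprime_one_right e)).mul_dvd_of_dvd_of_dvd
          ⟨k, hk⟩ hd2
      by_cases hE2 : n = e*(e+1)
      · have h1 : n / e = e + 1 := by rw [hE2, Nat.mul_div_cancel_left _ he']
        have h2 : n / (e+1) = e := by
          rw [hE2, mul_comm, Nat.mul_div_cancel_left _ (by omega : 0 < e + 1)]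
        have h3 : (n-1)/e = e := Nat.add_right_cancel (by rw [hde, h1])
        have h4 : (n-1)/(e+1) = e - 1 :=
          Nat.add_right_cancel (by rw [hde1, h2]; omega)
        have hE1 : n ≠ e*e := by rw [hE2]; exact ne_of_gt hsq
        have hQ1 : ¬ (n < e*e) := by rw [hE2]; exact lt_asymm hsq
        have hQ2 : n < (e+1)*(e+1) := by
          rw [hE2]
          exact mul_lt_mul_of_pos_right (Nat.lt_succ_self e) (by omega)
        rw [h1, h2, h3, h4, if_pos (by omega : e < e + 1),
          if_pos (by omega : e - 1 < e), if_neg hE1, if_neg (fun h => hQ1 h.2),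
          if_pos ⟨⟨e, by rw [hE2]; ring⟩, hQ2⟩, if_pos hE2]
        ring
      · obtain ⟨m, hm⟩ := hdd
        have hm1 : 2 ≤ m := by
          rcases Nat.lt_or_ge m 2 with h | h
          · interval_cases m
            · simp at hm; omega
            · exact absurd (by omega : n = e*(e+1)) hE2
          · exact h
        have hbig : 2*(e*(e+1)) ≤ n := by
          calc 2*(e*(e+1)) = e*(e+1)*2 := by ring
            _ ≤ e*(e+1)*m := Nat.mul_le_mul_left _ hm1
            _ = n := hm.symm
        have hlt' : e*e < n :=
          lt_of_lt_of_le (lt_of_lt_of_le hsq (Nat.le_mul_of_pos_left _ (by omega))) hbig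
        have hQ1 : ¬ (n < e*e) := lt_asymm hlt'
        have hQ2 : ¬ (n < (e+1)*(e+1)) := by
          refine not_lt.mpr (le_trans ?_ hbig)
          calc (e+1)*(e+1) ≤ (2*e)*(e+1) := mul_le_mul_left (by omega) _
            _ = 2*(e*(e+1)) := by ring
        have hE1 : n ≠ e*e := ne_of_gt hlt'
        have hP2 : (n-1)/(e+1) < (n-1)/e := by
          have h5 : (n-1)/(e+1) + 1 < (n-1)/e + 1 := by rw [hde, hde1]; exact hP1
          exact Nat.lt_of_add_lt_add_right h5
        rw [if_pos hP1, if_pos hP2, if_neg (fun h => hQ1 h.2), if_neg hE1,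
          if_neg (fun h => hQ2 h.2), if_neg hE2]
        ring
    · rw [if_neg hd2] at hde1
      have hde1' : (n-1)/(e+1) = n/(e+1) := by simpa using hde1
      have hE2 : n ≠ e*(e+1) := fun h => hd2 ⟨e, by rw [h]; ring⟩
      obtain ⟨m, rfl⟩ : ∃ m, k = m + 1 := ⟨k - 1, by omega⟩
      have hme : m ≠ e := by
        intro h
        exact hd2 ⟨e, by rw [hk, h]; ring⟩
      have h3 : (n-1)/e = m := Nat.add_right_cancel (by rw [hde, hnek])
      rcases Nat.lt_or_ge m e with hlt | hge
      · have h4 : n/(e+1) = m := by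
          obtain ⟨c, hc⟩ := Nat.le.dest hlt.le
          have h5 : e - m = c := by omega
          have hrw : n = (e - m) + (e+1) * m := by rw [hk, h5, ← hc]; ring
          rw [hrw, Nat.add_mul_div_left _ _ (by omega : 0 < e + 1),
            Nat.div_eq_of_lt (by omega)]
          omega
        have hB : (n-1)/(e+1) = m := by rw [hde1', h4]
        have hP2 : ¬ ((n-1)/(e+1) < (n-1)/e) := by rw [hB, h3]; exact lt_irrefl m
        rcases Nat.lt_or_ge (m+1) e with hlt2 | hge2
        · have hQ1 : n < e*e := by
            rw [hk]; exact mul_lt_mul' (le_refl e) hlt2 (Nat.zero_le _) he'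
          have hE1 : n ≠ e*e := ne_of_lt hQ1
          rw [if_pos hP1, if_neg hP2, if_pos ⟨⟨m+1, hk⟩, hQ1⟩, if_neg hE1,
            if_neg (fun h => hd2 h.1), if_neg hE2]
          ring
        · have hme1 : m + 1 = e := by omega
          have hE1 : n = e*e := by rw [hk, hme1]
          have hQ1 : ¬ (n < e*e) := by rw [hE1]; exact lt_irrefl _
          rw [if_pos hP1, if_neg hP2, if_neg (fun h => hQ1 h.2), if_pos hE1,
            if_neg (fun h => hd2 h.1), if_neg hE2]
          ring
      · have hgt : e < m := by omega
        have hP2 : (n-1)/(e+1) < (n-1)/e := by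
          rw [h3, hde1', Nat.div_lt_iff_lt_mul (by omega : 0 < e + 1), hk]
          calc e*(m+1) = e*m + e := by ring
            _ < e*m + m := Nat.add_lt_add_left hgt _
            _ = m*(e+1) := by ring
        have hlt' : e*e < n := by
          rw [hk]; exact mul_lt_mul' (le_refl e) (by omega) (Nat.zero_le _) he'
        have hQ1 : ¬ (n < e*e) := lt_asymm hlt'
        have hE1 : n ≠ e*e := ne_of_gt hlt'
        rw [if_pos hP1, if_pos hP2, if_neg (fun h => hQ1 h.2), if_neg hE1,
          if_neg (fun h => hd2 h.1), if_neg hE2]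
        ring
  · rw [if_neg hd1] at hde
    have hde' : (n-1)/e = n/e := by simpa using hde
    have hE1 : n ≠ e*e := fun h => hd1 ⟨e, h⟩
    by_cases hd2 : (e+1) ∣ n
    · rw [if_pos hd2] at hde1
      obtain ⟨k, hk⟩ := hd2
      have hk1 : 1 ≤ k := by
        rcases Nat.eq_zero_or_pos k with rfl | h
        · simp at hk; omega
        · exact h
      have hne : n/(e+1) = k := by rw [hk, Nat.mul_div_cancel_left _ (by omega : 0 < e+1)]
      have hE2 : n ≠ e*(e+1) := fun h => hd1 ⟨e+1, by rw [h]⟩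
      have hke : k ≠ e := fun h => hd1 ⟨e+1, by rw [hk, h]; ring⟩
      have hage : k ≤ n/e := by
        rw [Nat.le_div_iff_mul_le he', hk]
        calc k*e ≤ k*e + k := Nat.le_add_right _ _
          _ = (e+1)*k := by ring
      have hBk : (n-1)/(e+1) + 1 = k := by rw [hde1, hne]
      have hP2 : (n-1)/(e+1) < (n-1)/e := by
        rw [hde']
        exact lt_of_lt_of_le (hBk ▸ Nat.lt_succ_self _) hage
      rcases Nat.lt_or_ge k e with hlt | hge
      · have h4 : n/e = k := by
          have hrw : n = k + e * k := by rw [hk]; ring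
          rw [hrw, Nat.add_mul_div_left _ _ he', Nat.div_eq_of_lt hlt]
          omega
        have hP1 : ¬ (n/(e+1) < n/e) := by rw [hne, h4]; exact lt_irrefl k
        have hQ2 : n < (e+1)*(e+1) := by
          rw [hk]
          exact mul_lt_mul' (le_refl (e+1)) (by omega) (Nat.zero_le _) (by omega)
        rw [if_neg hP1, if_pos hP2, if_neg (fun h => hd1 h.1), if_neg hE1,
          if_pos ⟨⟨k, hk⟩, hQ2⟩, if_neg hE2]
        ring
      · have hgt : e < k := by omega
        have hP1 : n/(e+1) < n/e := by
          rw [hne]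
          have hstep : k + 1 ≤ n/e := by
            rw [Nat.le_div_iff_mul_le he', hk]
            calc (k+1)*e = k*e + e := by ring
              _ ≤ k*e + k := Nat.add_le_add_left (by omega) _
              _ = (e+1)*k := by ring
          omega
        have hQ2 : ¬ (n < (e+1)*(e+1)) := by
          refine not_lt.mpr ?_
          rw [hk]
          exact Nat.mul_le_mul_left _ (by omega)
        rw [if_pos hP1, if_pos hP2, if_neg (fun h => hd1 h.1), if_neg hE1,
          if_neg (fun h => hQ2 h.2), if_neg hE2]
        ring
    · rw [if_neg hd2] at hde1
      have hde1' : (n-1)/(e+1) = n/(e+1) := by simpa using hde1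
      have hE2 : n ≠ e*(e+1) := fun h => hd2 ⟨e, by rw [h]; ring⟩
      rw [hde', hde1',
        if_neg (show ¬(e ∣ n ∧ n < e*e) from fun h => hd1 h.1), if_neg hE1,
        if_neg (show ¬((e+1) ∣ n ∧ n < (e+1)*(e+1)) from fun h => hd2 h.1), if_neg hE2]
      ring

end DMRAux

open scoped Classical in
theorem differenced_mobius_recursion (μ₁ : ℕ → ℕ → ℤ)
    -- defining properties of the Möbius function of the floor quotient order,
    -- together with the convention `μ₁(1,0) = 0`
    (hconv : μ₁ 1 0 = 0)
    (hrefl : ∀ d : ℕ, 0 < d → μ₁ d d = 1)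
    (hzero : ∀ d n : ℕ, 0 < d → 0 < n → ¬ FloorQuotient d n → μ₁ d n = 0)
    (hrec : ∀ d n : ℕ, 0 < d → FloorQuotient d n → d ≠ n →
      ∑ e ∈ (Finset.Icc d n).filter
        (fun e => FloorQuotient d e ∧ FloorQuotient e n), μ₁ d e = 0)
    (n : ℕ) (hn : 3 ≤ n) :
    -- the differenced Möbius function `Δμ₁(1,m) = μ₁(1,m) - μ₁(1,m-1)`
    let Δ : ℕ → ℤ := fun m => μ₁ 1 m - μ₁ 1 (m - 1)
    ((¬ ∃ s : ℕ, 0 < s ∧ (n = s ^ 2 ∨ n = s * (s + 1))) →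
      ∑ d ∈ n.divisors.filter (fun d => Nat.sqrt n < d), Δ d = 0) ∧
    (∀ s : ℕ, 0 < s → (n = s ^ 2 ∨ n = s * (s + 1)) →
      ∑ d ∈ n.divisors.filter (fun d => Nat.sqrt n < d), Δ d = - μ₁ 1 s) := by
  intro Δ
  -- Step 1: the basic recursion in floor-quotient form
  have hS : ∀ m : ℕ, 2 ≤ m →
      ∑ e ∈ Finset.Icc 1 m, (if m/(e+1) < m/e then μ₁ 1 e else 0) = 0 := by
    intro m hm
    have h0 := hrec 1 m one_pos ⟨m, by omega, (Nat.div_self (by omega : 0 < m)).symm⟩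
      (by omega)
    rw [Finset.sum_filter] at h0
    calc ∑ e ∈ Finset.Icc 1 m, (if m/(e+1) < m/e then μ₁ 1 e else 0)
        = ∑ e ∈ Finset.Icc 1 m,
            (if FloorQuotient 1 e ∧ FloorQuotient e m then μ₁ 1 e else 0) := by
          refine Finset.sum_congr rfl fun e heI => ?_
          simp only [Finset.mem_Icc] at heI
          exact if_congr
            ⟨fun h => ⟨⟨e, heI.1, (Nat.div_self heI.1).symm⟩,
                (dmr_fq_iff e m heI.1 heI.2).mpr h⟩,
              fun h => (dmr_fq_iff e m heI.1 heI.2).mp h.2⟩ rfl rfl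
      _ = 0 := h0
  -- Step 2: master identity from the pointwise lemma
  have hmaster :
      ∑ e ∈ Finset.Icc 1 n,
          ((if n/(e+1) < n/e then μ₁ 1 e else 0)
            - (if (n-1)/(e+1) < (n-1)/e then μ₁ 1 e else 0))
      = ∑ e ∈ Finset.Icc 1 n,
          ((if e ∣ n ∧ n < e*e then μ₁ 1 e else 0) + (if n = e*e then μ₁ 1 e else 0)
            - (if (e+1) ∣ n ∧ n < (e+1)*(e+1) then μ₁ 1 e else 0)
            + (if n = e*(e+1) then μ₁ 1 e else 0)) :=
    Finset.sum_congr rfl fun e heI => by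
      simp only [Finset.mem_Icc] at heI
      exact dmr_pointwise n e heI.1 heI.2 hn _
  -- Step 3: LHS of the master identity vanishes
  have hL : ∑ e ∈ Finset.Icc 1 n,
      ((if n/(e+1) < n/e then μ₁ 1 e else 0)
        - (if (n-1)/(e+1) < (n-1)/e then μ₁ 1 e else 0)) = 0 := by
    rw [Finset.sum_sub_distrib, hS n (by omega)]
    have hrange : Finset.Icc 1 n = Finset.Icc 1 ((n-1)+1) := by congr 1; omega
    rw [hrange, Finset.sum_Icc_succ_top (by omega), hS (n-1) (by omega)]
    have hz1 : (n-1)/((n-1+1)+1) = 0 := Nat.div_eq_of_lt (by omega)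
    have hz2 : (n-1)/(n-1+1) = 0 := Nat.div_eq_of_lt (by omega)
    rw [hz1, hz2]
    simp
  -- Step 4: rewriting the four pieces of the RHS
  have hsubIcc : n.divisors ⊆ Finset.Icc 1 n := by
    intro d hd
    exact Finset.mem_Icc.mpr ⟨Nat.pos_of_mem_divisors hd, Nat.divisor_le hd⟩
  have hT1 : ∑ e ∈ Finset.Icc 1 n, (if e ∣ n ∧ n < e*e then μ₁ 1 e else 0)
      = ∑ d ∈ n.divisors, (if n < d*d then μ₁ 1 d else 0) := by
    have h1 : ∑ d ∈ n.divisors, (if n < d*d then μ₁ 1 d else 0)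
        = ∑ d ∈ n.divisors, (if d ∣ n ∧ n < d*d then μ₁ 1 d else 0) :=
      Finset.sum_congr rfl fun d hd =>
        (if_congr (and_iff_right (Nat.mem_divisors.mp hd).1) rfl rfl).symm
    rw [h1]
    exact (Finset.sum_subset hsubIcc fun e heI henot =>
      if_neg fun hc => henot (Nat.mem_divisors.mpr ⟨hc.1, by omega⟩)).symm
  have hT2 : ∑ e ∈ Finset.Icc 1 n, (if (e+1) ∣ n ∧ n < (e+1)*(e+1) then μ₁ 1 e else 0)
      = ∑ d ∈ n.divisors, (if n < d*d then μ₁ 1 (d-1) else 0) := by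
    rw [← Finset.sum_filter, ← Finset.sum_filter]
    refine Finset.sum_bij' (fun e _ => e + 1) (fun d _ => d - 1) ?_ ?_ ?_ ?_ ?_
    · intro e heI
      simp only [Finset.mem_filter, Finset.mem_Icc] at heI
      exact Finset.mem_filter.mpr
        ⟨Nat.mem_divisors.mpr ⟨heI.2.1, by omega⟩, heI.2.2⟩
    · intro d hd
      simp only [Finset.mem_filter, Nat.mem_divisors] at hd
      have hd2 : 2 ≤ d := by
        rcases Nat.lt_or_ge d 2 with h | h
        · interval_cases d
          · exact absurd (Nat.eq_zero_of_zero_dvd hd.1.1).symm (by omega)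
          · exact absurd hd.2 (by omega)
        · exact h
      have hdn : d ≤ n := Nat.le_of_dvd (by omega) hd.1.1
      have hd1 : d - 1 + 1 = d := by omega
      have hm1 : 1 ≤ d - 1 := by omega
      have hm2 : d - 1 ≤ n := by omega
      refine Finset.mem_filter.mpr ⟨Finset.mem_Icc.mpr ⟨hm1, hm2⟩, ?_, ?_⟩
      · rw [hd1]; exact hd.1.1
      · rw [hd1]; exact hd.2
    · intro e _
      show e + 1 - 1 = e
      omega
    · intro d hd
      simp only [Finset.mem_filter, Nat.mem_divisors] at hd
      have hd2 : 2 ≤ d := by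
        rcases Nat.lt_or_ge d 2 with h | h
        · interval_cases d
          · exact absurd (Nat.eq_zero_of_zero_dvd hd.1.1).symm (by omega)
          · exact absurd hd.2 (by omega)
        · exact h
      show d - 1 + 1 = d
      omega
    · intro e _; simp
  -- Step 5: the two special sums
  have hT3zero : (¬ ∃ s : ℕ, 0 < s ∧ (n = s ^ 2 ∨ n = s * (s + 1))) →
      ∑ e ∈ Finset.Icc 1 n, (if n = e*e then μ₁ 1 e else 0) = 0 := by
    intro h
    refine Finset.sum_eq_zero fun e heI => if_neg fun hc =>
      h ⟨e, (Finset.mem_Icc.mp heI).1, Or.inl (by rw [hc]; exact (pow_two e).symm)⟩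
  have hT4zero : (¬ ∃ s : ℕ, 0 < s ∧ (n = s ^ 2 ∨ n = s * (s + 1))) →
      ∑ e ∈ Finset.Icc 1 n, (if n = e*(e+1) then μ₁ 1 e else 0) = 0 := by
    intro h
    refine Finset.sum_eq_zero fun e heI => if_neg fun hc =>
      h ⟨e, (Finset.mem_Icc.mp heI).1, Or.inr hc⟩
  have hT3sq : ∀ s : ℕ, 0 < s → n = s ^ 2 →
      ∑ e ∈ Finset.Icc 1 n, (if n = e*e then μ₁ 1 e else 0) = μ₁ 1 s := by
    intro s hs hsqn
    have hss : n = s*s := by rw [hsqn]; exact pow_two s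
    have hmem : s ∈ Finset.Icc 1 n :=
      Finset.mem_Icc.mpr ⟨hs, by rw [hss]; exact Nat.le_mul_of_pos_left s hs⟩
    rw [Finset.sum_eq_single_of_mem s hmem (fun e _ hne => if_neg fun hc =>
      hne (Nat.mul_self_inj.mp (hc.symm.trans hss))), if_pos hss]
  have hT4pr : ∀ s : ℕ, 0 < s → n = s * (s + 1) →
      ∑ e ∈ Finset.Icc 1 n, (if n = e*(e+1) then μ₁ 1 e else 0) = μ₁ 1 s := by
    intro s hs hpr
    have hmem : s ∈ Finset.Icc 1 n :=
      Finset.mem_Icc.mpr ⟨hs, by rw [hpr]; exact Nat.le_mul_of_pos_right s (by omega)⟩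
    rw [Finset.sum_eq_single_of_mem s hmem (fun e _ hne => if_neg fun hc =>
      hne (dmr_pronic_inj e s (hc.symm.trans hpr))), if_pos hpr]
  have hT3pr : ∀ s : ℕ, 0 < s → n = s * (s + 1) →
      ∑ e ∈ Finset.Icc 1 n, (if n = e*e then μ₁ 1 e else 0) = 0 := by
    intro s hs hpr
    refine Finset.sum_eq_zero fun e heI => if_neg fun hc => ?_
    exact dmr_sq_ne_pronic e s (Finset.mem_Icc.mp heI).1 (hc.symm.trans hpr)
  have hT4sq : ∀ s : ℕ, 0 < s → n = s ^ 2 →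
      ∑ e ∈ Finset.Icc 1 n, (if n = e*(e+1) then μ₁ 1 e else 0) = 0 := by
    intro s hs hsqn
    have hss : n = s*s := by rw [hsqn]; exact pow_two s
    refine Finset.sum_eq_zero fun e heI => if_neg fun hc => ?_
    exact dmr_sq_ne_pronic s e hs (hss.symm.trans hc)
  -- Step 6: rewriting the goal sum
  have htarget : ∑ d ∈ n.divisors.filter (fun d => Nat.sqrt n < d), Δ d
      = (∑ d ∈ n.divisors, (if n < d*d then μ₁ 1 d else 0))
        - ∑ d ∈ n.divisors, (if n < d*d then μ₁ 1 (d-1) else 0) := by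
    rw [Finset.sum_filter, ← Finset.sum_sub_distrib]
    refine Finset.sum_congr rfl fun d _ => ?_
    have hiff : (Nat.sqrt n < d) ↔ (n < d*d) := by rw [Nat.sqrt_lt', pow_two]
    rw [if_congr hiff rfl rfl]
    show (if n < d*d then μ₁ 1 d - μ₁ 1 (d-1) else 0) = _
    split <;> simp
  -- Step 7: split the RHS of the master identity and conclude
  have hL2 : ∑ e ∈ Finset.Icc 1 n,
      (if (n-1)/(e+1) < (n-1)/e then μ₁ 1 e else 0) = 0 := by
    have hrange : Finset.Icc 1 n = Finset.Icc 1 ((n-1)+1) := by congr 1; omega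
    rw [hrange, Finset.sum_Icc_succ_top (by omega), hS (n-1) (by omega)]
    have hz1 : (n-1)/((n-1+1)+1) = 0 := Nat.div_eq_of_lt (by omega)
    have hz2 : (n-1)/(n-1+1) = 0 := Nat.div_eq_of_lt (by omega)
    rw [hz1, hz2]
    simp
  simp only [Finset.sum_add_distrib, Finset.sum_sub_distrib] at hmaster
  rw [hS n (by omega), hL2, hT1, hT2] at hmaster
  constructor
  · intro hno
    rw [htarget]
    have h3 := hT3zero hno
    have h4 := hT4zero hno
    rw [h3, h4] at hmaster
    linarith
  · intro s hs hcase
    rw [htarget]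
    rcases hcase with h | h
    · rw [hT3sq s hs h, hT4sq s hs h] at hmaster
      linarith
    · rw [hT3pr s hs h, hT4pr s hs h] at hmaster
      linarith
end
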